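/- arXiv:2002.07313 — 2 statements merged into one kernel-verified Lean document; each statement's English description precedes it below -/
import Mathlib

section
/- Let c ∈ ℝ be a fixed constant and let p = (log n + log log n + c)/(2n). Then the probability that every vertex of the random digraph D_{n,p} has total degree (in-degree plus out-degree) at least 2 tends to e^{−e^{−c}} as n → ∞. -/
open Classical Filter Topology
open Finset

noncomputable section

/-- Number of arcs of a digraph on `Fin n`, given by a `Bool`-valued adjacency function. -/
def arcCount (n : ℕ) (D : Fin n → Fin n → Bool) : ℕ :=
  (Finset.univ.filter fun a : Fin n × Fin n => D a.1 a.2 = true).card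

/-- A digraph has no loops. -/
def Loopless (n : ℕ) (D : Fin n → Fin n → Bool) : Prop := ∀ i, D i i = false

/-- The probability that the binomial random digraph `D_{n,p}` (each of the `n(n-1)` possible
arcs present independently with probability `p`) satisfies the event `E`. -/
def probDnp (n : ℕ) (p : ℝ) (E : (Fin n → Fin n → Bool) → Prop) : ℝ :=
  ∑ D : Fin n → Fin n → Bool,
    if Loopless n D ∧ E D then
      p ^ arcCount n D * (1 - p) ^ (n * (n - 1) - arcCount n D)
    else 0

/-- The in-degree of vertex `v`: the number of arcs with head `v`. -/
def inDeg (n : ℕ) (D : Fin n → Fin n → Bool) (v : Fin n) : ℕ :=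
  (Finset.univ.filter fun u : Fin n => D u v = true).card

/-- The out-degree of vertex `v`: the number of arcs with tail `v`. -/
def outDeg (n : ℕ) (D : Fin n → Fin n → Bool) (v : Fin n) : ℕ :=
  (Finset.univ.filter fun u : Fin n => D v u = true).card

namespace Stmt7Aux

variable {α : Type*} [Fintype α] [DecidableEq α]

/-- Expectation with independent coordinate weights. -/
def Ew (w : α → Bool → ℝ) (f : (α → Bool) → ℝ) : ℝ :=
  ∑ ω : α → Bool, (∏ a, w a (ω a)) * f ω

/-- `f` depends only on coordinates in `B`. -/
def Meas (B : Finset α) (f : (α → Bool) → ℝ) : Prop :=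
  ∀ ω ω' : α → Bool, (∀ a ∈ B, ω a = ω' a) → f ω = f ω'

lemma Meas.mono {B B' : Finset α} {f} (h : Meas B f) (hBB : B ⊆ B') : Meas B' f :=
  fun ω ω' hag => h ω ω' (fun a ha => hag a (hBB ha))

def comb (B : Finset α) (x : {a // a ∈ B} → Bool) (y : {a // a ∉ B} → Bool) : α → Bool :=
  fun a => if h : a ∈ B then x ⟨a, h⟩ else y ⟨a, h⟩

def splitEquiv (B : Finset α) :
    (α → Bool) ≃ ({a // a ∈ B} → Bool) × ({a // a ∉ B} → Bool) where
  toFun ω := (fun a => ω a, fun a => ω a)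
  invFun xy := comb B xy.1 xy.2
  left_inv ω := by
    funext a; by_cases h : a ∈ B <;> simp [comb, h]
  right_inv := by
    rintro ⟨x, y⟩
    refine Prod.ext ?_ ?_ <;> funext a
    · simp only [comb]; rw [dif_pos a.2]
    · simp only [comb]; rw [dif_neg a.2]

lemma univ_congr {γ : Type*} (i1 i2 : Fintype γ) :
    @Finset.univ γ i1 = @Finset.univ γ i2 :=
  Finset.ext fun x => iff_of_true (@Finset.mem_univ γ i1 x) (@Finset.mem_univ γ i2 x)

lemma sum_pi_bool {β : Type*} [Fintype β] [DecidableEq β] (g : β → Bool → ℝ) :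
    ∑ x : β → Bool, ∏ a, g a (x a) = ∏ a, (g a false + g a true) := by
  rw [← Fintype.prod_sum fun a (b : Bool) => g a b]
  exact Finset.prod_congr rfl fun a _ => by rw [Fintype.sum_bool]; ring

lemma Ew_double (w : α → Bool → ℝ) (f : (α → Bool) → ℝ) (B : Finset α) :
    Ew w f = ∑ x : {a // a ∈ B} → Bool, ∑ y : {a // a ∉ B} → Bool,
      ((∏ a : {a // a ∈ B}, w a (x a)) * (∏ a : {a // a ∉ B}, w a (y a)))
        * f (comb B x y) := by
  have h0 := Equiv.sum_comp (splitEquiv B).symm (fun ω => (∏ a, w a (ω a)) * f ω)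
  rw [Ew, ← h0, Fintype.sum_prod_type]
  refine Finset.sum_congr rfl fun x _ => Finset.sum_congr rfl fun y _ => ?_
  have h1 : (splitEquiv B).symm (x, y) = comb B x y := rfl
  rw [h1]
  congr 1
  rw [← Fintype.prod_subtype_mul_prod_subtype (fun a => a ∈ B)
    (fun a => w a (comb B x y a))]
  congr 1
  · exact Finset.prod_congr (univ_congr _ _) fun a _ => by
      simp only [comb]; rw [dif_pos a.2]
  · exact Finset.prod_congr (univ_congr _ _) fun a _ => by
      simp only [comb]; rw [dif_neg a.2]

lemma prod_norm_one {β : Type*} [Fintype β] [DecidableEq β] (g : β → Bool → ℝ)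
    (hg : ∀ a, g a false + g a true = 1) :
    ∑ x : β → Bool, ∏ a, g a (x a) = 1 := by
  rw [sum_pi_bool]
  exact Finset.prod_eq_one fun a _ => hg a

lemma Ew_meas (w : α → Bool → ℝ) (hw : ∀ a, w a false + w a true = 1)
    (B : Finset α) (f : (α → Bool) → ℝ) (hf : Meas B f) :
    Ew w f = ∑ x : {a // a ∈ B} → Bool,
      (∏ a : {a // a ∈ B}, w a (x a)) * f (comb B x fun _ => false) := by
  rw [Ew_double w f B]
  refine Finset.sum_congr rfl fun x _ => ?_
  have hfy : ∀ y : {a // a ∉ B} → Bool, f (comb B x y) = f (comb B x fun _ => false) :=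
    fun y => hf _ _ (fun a ha => by simp only [comb]; rw [dif_pos ha, dif_pos ha])
  calc ∑ y : {a // a ∉ B} → Bool,
        ((∏ a : {a // a ∈ B}, w a (x a)) * (∏ a : {a // a ∉ B}, w a (y a)))
          * f (comb B x y)
      = ((∏ a : {a // a ∈ B}, w a (x a)) * f (comb B x fun _ => false))
          * ∑ y : {a // a ∉ B} → Bool, ∏ a : {a // a ∉ B}, w a (y a) := by
        rw [Finset.mul_sum]
        exact Finset.sum_congr rfl fun y _ => by rw [hfy y]; ring
    _ = _ := by
        rw [prod_norm_one (fun a : {a // a ∉ B} => w a) (fun a => hw a)]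
        ring

lemma Ew_meas_compl (w : α → Bool → ℝ) (hw : ∀ a, w a false + w a true = 1)
    (B : Finset α) (g : (α → Bool) → ℝ) (hg : Meas Bᶜ g) :
    Ew w g = ∑ y : {a // a ∉ B} → Bool,
      (∏ a : {a // a ∉ B}, w a (y a)) * g (comb B (fun _ => false) y) := by
  rw [Ew_double w g B, Finset.sum_comm]
  refine Finset.sum_congr rfl fun y _ => ?_
  have hgx : ∀ x : {a // a ∈ B} → Bool, g (comb B x y) = g (comb B (fun _ => false) y) :=
    fun x => hg _ _ (fun a ha => by
      have h : a ∉ B := Finset.mem_compl.1 ha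
      simp only [comb]; rw [dif_neg h, dif_neg h])
  calc ∑ x : {a // a ∈ B} → Bool,
        ((∏ a : {a // a ∈ B}, w a (x a)) * (∏ a : {a // a ∉ B}, w a (y a)))
          * g (comb B x y)
      = ((∏ a : {a // a ∉ B}, w a (y a)) * g (comb B (fun _ => false) y))
          * ∑ x : {a // a ∈ B} → Bool, ∏ a : {a // a ∈ B}, w a (x a) := by
        rw [Finset.mul_sum]
        exact Finset.sum_congr rfl fun x _ => by rw [hgx x]; ring
    _ = _ := by
        rw [prod_norm_one (fun a : {a // a ∈ B} => w a) (fun a => hw a)]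
        ring

lemma Ew_mul (w : α → Bool → ℝ) (hw : ∀ a, w a false + w a true = 1)
    (B : Finset α) (f g : (α → Bool) → ℝ) (hf : Meas B f) (hg : Meas Bᶜ g) :
    Ew w (fun ω => f ω * g ω) = Ew w f * Ew w g := by
  rw [Ew_meas w hw B f hf, Ew_meas_compl w hw B g hg, Finset.sum_mul_sum,
    Ew_double w (fun ω => f ω * g ω) B]
  refine Finset.sum_congr rfl fun x _ => Finset.sum_congr rfl fun y _ => ?_
  have h1 : f (comb B x y) = f (comb B x fun _ => false) :=
    hf _ _ (fun a ha => by simp only [comb]; rw [dif_pos ha, dif_pos ha])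
  have h2 : g (comb B x y) = g (comb B (fun _ => false) y) :=
    hg _ _ (fun a ha => by
      have h : a ∉ B := Finset.mem_compl.1 ha
      simp only [comb]; rw [dif_neg h, dif_neg h])
  rw [h1, h2]; ring

lemma Ew_one (w : α → Bool → ℝ) (hw : ∀ a, w a false + w a true = 1) :
    Ew w (fun _ => 1) = 1 := by
  rw [Ew]
  simp only [mul_one]
  exact prod_norm_one w hw

lemma Ew_prod {ι : Type*} [DecidableEq ι] (w : α → Bool → ℝ)
    (hw : ∀ a, w a false + w a true = 1) (S : Finset ι) (Bf : ι → Finset α)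
    (F : ι → (α → Bool) → ℝ)
    (hdisj : ∀ i ∈ S, ∀ j ∈ S, i ≠ j → Disjoint (Bf i) (Bf j))
    (hmeas : ∀ i ∈ S, Meas (Bf i) (F i)) :
    Ew w (fun ω => ∏ i ∈ S, F i ω) = ∏ i ∈ S, Ew w (F i) := by
  induction S using Finset.induction with
  | empty => simp only [Finset.prod_empty]; exact Ew_one w hw
  | insert v S hv ih =>
    have hmeasg : Meas (Bf v)ᶜ (fun ω => ∏ i ∈ S, F i ω) := by
      intro ω ω' hag
      refine Finset.prod_congr rfl fun i hi => ?_
      refine hmeas i (Finset.mem_insert_of_mem hi) ω ω' fun a ha => ?_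
      refine hag a (Finset.mem_compl.2 ?_)
      have hd := hdisj i (Finset.mem_insert_of_mem hi) v (Finset.mem_insert_self v S)
        (fun h => hv (h ▸ hi))
      exact Finset.disjoint_left.1 hd ha
    have step : Ew w (fun ω => ∏ i ∈ insert v S, F i ω)
        = Ew w (F v) * Ew w (fun ω => ∏ i ∈ S, F i ω) := by
      have : (fun ω => ∏ i ∈ insert v S, F i ω)
          = fun ω => F v ω * ∏ i ∈ S, F i ω := by
        funext ω; rw [Finset.prod_insert hv]
      rw [this]
      exact Ew_mul w hw (Bf v) _ _ (hmeas v (Finset.mem_insert_self v S)) hmeasg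
    rw [step, Finset.prod_insert hv,
      ih (fun i hi j hj hij => hdisj i (Finset.mem_insert_of_mem hi) j
        (Finset.mem_insert_of_mem hj) hij)
      (fun i hi => hmeas i (Finset.mem_insert_of_mem hi))]

lemma Ew_mono (w : α → Bool → ℝ) (hw0 : ∀ a b, 0 ≤ w a b)
    {f g : (α → Bool) → ℝ} (h : ∀ ω, f ω ≤ g ω) : Ew w f ≤ Ew w g :=
  Finset.sum_le_sum fun ω _ =>
    mul_le_mul_of_nonneg_left (h ω) (Finset.prod_nonneg fun a _ => hw0 _ _)

lemma Ew_sum {ι : Type*} (w : α → Bool → ℝ) (s : Finset ι)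
    (F : ι → (α → Bool) → ℝ) :
    Ew w (fun ω => ∑ i ∈ s, F i ω) = ∑ i ∈ s, Ew w (F i) := by
  simp only [Ew, Finset.mul_sum]
  rw [Finset.sum_comm]

lemma Ew_smul (w : α → Bool → ℝ) (r : ℝ) (f : (α → Bool) → ℝ) :
    Ew w (fun ω => r * f ω) = r * Ew w f := by
  simp only [Ew, Finset.mul_sum]
  exact Finset.sum_congr rfl fun ω _ => by ring


lemma Ew_allFalse (w : α → Bool → ℝ) (hw : ∀ a, w a false + w a true = 1)
    (B : Finset α) :
    Ew w (fun ω => if ∀ a ∈ B, ω a = false then (1:ℝ) else 0) = ∏ a ∈ B, w a false := by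
  have hf : Meas B (fun ω => if ∀ a ∈ B, ω a = false then (1:ℝ) else 0) := by
    intro ω ω' hag
    have : (∀ a ∈ B, ω a = false) ↔ (∀ a ∈ B, ω' a = false) :=
      ⟨fun h a ha => (hag a ha).symm.trans (h a ha), fun h a ha => (hag a ha).trans (h a ha)⟩
    simp only [this]
  rw [Ew_meas w hw B _ hf]
  rw [Fintype.sum_eq_single (fun _ => false : {a // a ∈ B} → Bool)]
  · have hcond : (∀ a ∈ B, comb B (fun _ => false) (fun _ => false) a = false) := by
      intro a ha; simp only [comb]; rw [dif_pos ha]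
    rw [if_pos hcond, mul_one, ← Finset.prod_coe_sort B (fun a => w a false)]
    try exact Finset.prod_congr (univ_congr _ _) fun a _ => rfl
  · intro x hx
    have hcond : ¬ (∀ a ∈ B, comb B x (fun _ => false) a = false) := by
      intro h
      apply hx
      funext s
      have := h s.1 s.2
      simpa only [comb, dif_pos s.2] using this
    rw [if_neg hcond, mul_zero]

def boolFunEquiv (β : Type*) [Fintype β] [DecidableEq β] : (β → Bool) ≃ Finset β where
  toFun x := Finset.univ.filter fun s => x s = true
  invFun T := fun s => decide (s ∈ T)
  left_inv x := by
    funext s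
    cases hx : x s <;> simp [hx]
  right_inv T := by
    ext s; simp

lemma Ew_atMostOne (w : α → Bool → ℝ) (hw : ∀ a, w a false + w a true = 1)
    (B : Finset α) (p : ℝ)
    (hB : ∀ a ∈ B, w a true = p ∧ w a false = 1 - p) :
    Ew w (fun ω => if ((B.filter fun a => ω a = true).card ≤ 1) then (1:ℝ) else 0)
      = (1-p) ^ B.card + B.card * (p * (1-p) ^ (B.card - 1)) := by
  have hf : Meas B (fun ω => if ((B.filter fun a => ω a = true).card ≤ 1) then (1:ℝ) else 0) := by
    intro ω ω' hag
    have h1 : (B.filter fun a => ω a = true) = (B.filter fun a => ω' a = true) :=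
      Finset.filter_congr fun a ha => by rw [hag a ha]
    dsimp only
    rw [h1]
  rw [Ew_meas w hw B _ hf]
  have hcard : ∀ x : {a // a ∈ B} → Bool,
      (B.filter fun a => comb B x (fun _ => false) a = true)
        = Finset.map (Function.Embedding.subtype _)
            (Finset.univ.filter fun s : {a // a ∈ B} => x s = true) := by
    intro x
    ext a
    simp only [Finset.mem_filter, Finset.mem_map, Finset.mem_univ, true_and,
      Function.Embedding.coe_subtype]
    constructor
    · rintro ⟨ha, hx⟩
      refine ⟨⟨a, ha⟩, ?_, rfl⟩
      rwa [comb, dif_pos ha] at hx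
    · rintro ⟨s, hs, rfl⟩
      refine ⟨s.2, ?_⟩
      rw [comb, dif_pos s.2]
      exact hs
  have hstep : ∀ x : {a // a ∈ B} → Bool,
      (∏ a : {a // a ∈ B}, w a (x a)) *
        (if ((B.filter fun a => comb B x (fun _ => false) a = true).card ≤ 1) then (1:ℝ) else 0)
      = (∏ a : {a // a ∈ B}, w a (x a)) *
        (if ((Finset.univ.filter fun s : {a // a ∈ B} => x s = true).card ≤ 1)
          then (1:ℝ) else 0) := by
    intro x
    rw [hcard x, Finset.card_map]
  rw [Finset.sum_congr rfl fun x _ => hstep x]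
  -- now transport along the boolFunEquiv
  rw [← Equiv.sum_comp (boolFunEquiv {a // a ∈ B}).symm
    (fun x => (∏ a : {a // a ∈ B}, w a (x a)) *
      (if ((Finset.univ.filter fun s : {a // a ∈ B} => x s = true).card ≤ 1)
        then (1:ℝ) else 0))]
  have hsymm : ∀ T : Finset {a // a ∈ B},
      (boolFunEquiv {a // a ∈ B}).symm T = fun s => decide (s ∈ T) := fun T => rfl
  have hfilT : ∀ T : Finset {a // a ∈ B},
      (Finset.univ.filter fun s : {a // a ∈ B} => decide (s ∈ T) = true) = T := by
    intro T; ext s; simp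
  have hprodT : ∀ T : Finset {a // a ∈ B},
      (∏ a : {a // a ∈ B}, w a (decide (a ∈ T)))
        = p ^ T.card * (1-p) ^ (B.card - T.card) := by
    intro T
    rw [← Finset.prod_mul_prod_compl T (fun a : {a // a ∈ B} => w a (decide (a ∈ T)))]
    have e1 : ∏ a ∈ T, w a.1 (decide (a ∈ T)) = p ^ T.card := by
      rw [Finset.prod_congr rfl fun a ha => ?_, Finset.prod_const]
      · rw [decide_eq_true ha]
        exact (hB a.1 a.2).1
    have e2 : ∏ a ∈ Tᶜ, w a.1 (decide (a ∈ T)) = (1-p) ^ (B.card - T.card) := by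
      rw [Finset.prod_congr rfl fun a ha => ?_, Finset.prod_const, Finset.card_compl]
      · congr 1
        simp [Finset.card_univ]
      · have : a ∉ T := Finset.mem_compl.1 ha
        rw [decide_eq_false this]
        exact (hB a.1 a.2).2
    rw [e1, e2]
  have hterm : ∀ T : Finset {a // a ∈ B},
      (∏ a : {a // a ∈ B}, w a ((boolFunEquiv {a // a ∈ B}).symm T a)) *
        (if ((Finset.univ.filter
          fun s : {a // a ∈ B} => (boolFunEquiv {a // a ∈ B}).symm T s = true).card ≤ 1)
          then (1:ℝ) else 0)
      = if T.card ≤ 1 then p ^ T.card * (1-p) ^ (B.card - T.card) else 0 := by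
    intro T
    rw [hsymm T]
    simp only [hfilT T, hprodT T]
    by_cases h : T.card ≤ 1
    · rw [if_pos h, if_pos h, mul_one]
    · rw [if_neg h, if_neg h, mul_zero]
  rw [Finset.sum_congr rfl fun T _ => hterm T, ← Finset.sum_filter]
  have hset : (Finset.univ.filter fun T : Finset {a // a ∈ B} => T.card ≤ 1)
      = insert ∅ (Finset.univ.image fun s : {a // a ∈ B} => ({s} : Finset {a // a ∈ B})) := by
    ext T
    simp only [Finset.mem_filter, Finset.mem_univ, true_and, Finset.mem_insert,
      Finset.mem_image]
    constructor
    · intro h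
      interval_cases h' : T.card
      · exact Or.inl (Finset.card_eq_zero.1 h')
      · obtain ⟨a, rfl⟩ := Finset.card_eq_one.1 h'
        exact Or.inr ⟨a, rfl⟩
    · rintro (rfl | ⟨a, -, rfl⟩) <;> simp
  rw [hset, Finset.sum_insert (by simp)]
  rw [Finset.sum_image (fun a _ b _ h => Finset.singleton_injective h)]
  simp only [Finset.card_empty, Finset.card_singleton, pow_zero, one_mul, Nat.sub_zero,
    pow_one]
  rw [Finset.sum_const, nsmul_eq_mul]
  simp [Finset.card_univ]

/-! ### The digraph weight model -/

def wgt (n : ℕ) (p : ℝ) : (Fin n × Fin n) → Bool → ℝ :=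
  fun a b => if a.1 = a.2 then (if b then 0 else 1) else (if b then p else 1 - p)

lemma wgt_norm (n : ℕ) (p : ℝ) : ∀ a, wgt n p a false + wgt n p a true = 1 := by
  intro a; by_cases h : a.1 = a.2 <;> simp [wgt, h]

lemma wgt_nonneg {n : ℕ} {p : ℝ} (hp0 : 0 ≤ p) (hp1 : p ≤ 1) :
    ∀ (a : Fin n × Fin n) (b : Bool), 0 ≤ wgt n p a b := by
  intro a b
  unfold wgt
  by_cases h : a.1 = a.2 <;> cases b <;> simp [h] <;> linarith

lemma card_offdiag (n : ℕ) :
    (Finset.univ.filter (fun a : Fin n × Fin n => ¬ a.1 = a.2)).card = n * (n - 1) := by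
  have h1 : (Finset.univ.filter (fun a : Fin n × Fin n => a.1 = a.2)).card
      + (Finset.univ.filter (fun a : Fin n × Fin n => ¬ a.1 = a.2)).card
      = (Finset.univ : Finset (Fin n × Fin n)).card :=
    Finset.card_filter_add_card_filter_not _
  have h2 : (Finset.univ.filter (fun a : Fin n × Fin n => a.1 = a.2))
      = Finset.univ.image (fun i : Fin n => (i, i)) := by
    ext ⟨i, j⟩
    simp only [Finset.mem_filter, Finset.mem_univ, true_and, Finset.mem_image]
    constructor
    · rintro h; exact ⟨i, by simp [h]⟩
    · rintro ⟨u, hu⟩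
      obtain ⟨h1, h2⟩ := Prod.mk.injEq .. ▸ hu
      simp [← h1, ← h2]
  have h3 : (Finset.univ.filter (fun a : Fin n × Fin n => a.1 = a.2)).card = n := by
    rw [h2, Finset.card_image_of_injective _ (fun a b h => (Prod.mk.injEq .. ▸ h).1)]
    simp
  have h4 : (Finset.univ : Finset (Fin n × Fin n)).card = n * n := by simp
  have h5 : n * (n - 1) = n * n - n := by
    cases n with
    | zero => simp
    | succ m => rw [Nat.succ_sub_one, Nat.mul_succ, Nat.add_sub_cancel]
  omega

lemma prod_wgt {n : ℕ} (p : ℝ) {D : Fin n → Fin n → Bool} (hD : Loopless n D) :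
    (∏ a : Fin n × Fin n, wgt n p a (D a.1 a.2))
      = p ^ arcCount n D * (1 - p) ^ (n * (n - 1) - arcCount n D) := by
  rw [← Finset.prod_filter_mul_prod_filter_not Finset.univ
    (fun a : Fin n × Fin n => a.1 = a.2) (fun a => wgt n p a (D a.1 a.2))]
  have h1 : (∏ a ∈ Finset.univ.filter (fun a : Fin n × Fin n => a.1 = a.2),
      wgt n p a (D a.1 a.2)) = 1 := by
    refine Finset.prod_eq_one fun a ha => ?_
    obtain ⟨i, j⟩ := a
    obtain ⟨-, h⟩ := Finset.mem_filter.1 ha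
    simp only at h
    subst h
    simp [wgt, hD i]
  rw [h1, one_mul]
  have h2 : ∀ a ∈ Finset.univ.filter (fun a : Fin n × Fin n => ¬ a.1 = a.2),
      wgt n p a (D a.1 a.2) = if D a.1 a.2 then p else 1 - p := by
    intro a ha
    obtain ⟨-, h⟩ := Finset.mem_filter.1 ha
    simp [wgt, h]
  rw [Finset.prod_congr rfl h2, Finset.prod_ite, Finset.prod_const, Finset.prod_const]
  have harc : ((Finset.univ.filter (fun a : Fin n × Fin n => ¬ a.1 = a.2)).filter
      (fun a => D a.1 a.2 = true)).card = arcCount n D := by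
    rw [Finset.filter_filter]
    unfold arcCount
    congr 1
    ext a
    simp only [Finset.mem_filter, Finset.mem_univ, true_and]
    constructor
    · rintro ⟨-, h⟩; exact h
    · intro h
      refine ⟨fun hd => ?_, h⟩
      obtain ⟨i, j⟩ := a
      simp only at hd
      subst hd
      rw [hD i] at h
      exact Bool.false_ne_true h
  have hneg : ((Finset.univ.filter (fun a : Fin n × Fin n => ¬ a.1 = a.2)).filter
      (fun a => ¬ D a.1 a.2 = true)).card = n * (n - 1) - arcCount n D := by
    have := Finset.card_filter_add_card_filter_not
      (s := Finset.univ.filter (fun a : Fin n × Fin n => ¬ a.1 = a.2))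
      (p := fun a => D a.1 a.2 = true)
    rw [card_offdiag n] at this
    omega
  rw [harc, hneg]

lemma probDnp_eq (n : ℕ) (p : ℝ) (E : (Fin n → Fin n → Bool) → Prop) :
    probDnp n p E = Ew (wgt n p) (fun ω => if E (fun i j => ω (i, j)) then 1 else 0) := by
  have hsc := Equiv.sum_comp (Equiv.curry (Fin n) (Fin n) Bool).symm
    (fun ω : Fin n × Fin n → Bool =>
      (∏ a : Fin n × Fin n, wgt n p a (ω a)) * (if E (fun i j => ω (i, j)) then 1 else 0))
  rw [Ew, ← hsc]
  · unfold probDnp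
    refine Finset.sum_congr (univ_congr _ _) fun D _ => ?_
    have hc : ∀ a : Fin n × Fin n, ((Equiv.curry (Fin n) (Fin n) Bool).symm D) a = D a.1 a.2 :=
      fun a => rfl
    by_cases hL : Loopless n D
    · have hp := prod_wgt p hL
      by_cases hE : E D
      · rw [if_pos ⟨hL, hE⟩]
        have hE' : E (fun i j => ((Equiv.curry (Fin n) (Fin n) Bool).symm D) (i, j)) := hE
        rw [if_pos hE', mul_one]
        exact hp.symm
      · rw [if_neg (fun h => hE h.2)]
        have hE' : ¬ E (fun i j => ((Equiv.curry (Fin n) (Fin n) Bool).symm D) (i, j)) := hE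
        rw [if_neg hE', mul_zero]
    · rw [if_neg (fun h => hL h.1)]
      obtain ⟨i, hi⟩ : ∃ i, D i i = true := by
        by_contra h
        push_neg at h
        exact hL fun i => by
          cases hDi : D i i
          · rfl
          · exact absurd hDi (h i)
      have h0 : wgt n p (i, i) (((Equiv.curry (Fin n) (Fin n) Bool).symm D) (i, i)) = 0 := by
        rw [hc (i, i)]
        simp [wgt, hi]
      rw [Finset.prod_eq_zero (Finset.mem_univ (i, i)) h0, zero_mul]

/-! ### Degrees and bad vertices -/

def degP (n : ℕ) (ω : Fin n × Fin n → Bool) (v : Fin n) : ℕ :=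
  (Finset.univ.filter fun a : Fin n × Fin n => (a.1 = v ∨ a.2 = v) ∧ ω a = true).card

lemma deg_eq {n : ℕ} {D : Fin n → Fin n → Bool} (hD : Loopless n D) (v : Fin n) :
    inDeg n D v + outDeg n D v = degP n (fun a => D a.1 a.2) v := by
  classical
  set A := Finset.univ.filter (fun a : Fin n × Fin n => a.1 = v ∧ D a.1 a.2 = true) with hA
  set B := Finset.univ.filter (fun a : Fin n × Fin n => a.2 = v ∧ D a.1 a.2 = true) with hB
  have hunion : Finset.univ.filter
      (fun a : Fin n × Fin n => (a.1 = v ∨ a.2 = v) ∧ D a.1 a.2 = true) = A ∪ B := by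
    ext a
    simp only [hA, hB, Finset.mem_union, Finset.mem_filter, Finset.mem_univ, true_and]
    tauto
  have hdisj : Disjoint A B := by
    rw [Finset.disjoint_left]
    intro a haA haB
    obtain ⟨-, hx⟩ := Finset.mem_filter.1 haA
    obtain ⟨-, hy⟩ := Finset.mem_filter.1 haB
    obtain ⟨hx1, hx2⟩ := hx
    obtain ⟨hy1, -⟩ := hy
    rw [hx1, hy1, hD] at hx2
    exact Bool.false_ne_true hx2
  have hcardA : A.card = outDeg n D v := by
    rw [hA]
    unfold outDeg
    rw [show Finset.univ.filter (fun a : Fin n × Fin n => a.1 = v ∧ D a.1 a.2 = true)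
        = (Finset.univ.filter fun u : Fin n => D v u = true).image (fun u => (v, u)) from ?_]
    · exact Finset.card_image_of_injective _ (fun a b h => (Prod.mk.injEq .. ▸ h).2)
    · ext ⟨x, y⟩
      simp only [Finset.mem_filter, Finset.mem_univ, true_and, Finset.mem_image]
      constructor
      · rintro ⟨rfl, h⟩; exact ⟨y, h, rfl⟩
      · rintro ⟨u, hu, heq⟩
        obtain ⟨h1, h2⟩ := Prod.mk.injEq .. ▸ heq
        subst h1; subst h2
        exact ⟨rfl, hu⟩
  have hcardB : B.card = inDeg n D v := by
    rw [hB]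
    unfold inDeg
    rw [show Finset.univ.filter (fun a : Fin n × Fin n => a.2 = v ∧ D a.1 a.2 = true)
        = (Finset.univ.filter fun u : Fin n => D u v = true).image (fun u => (u, v)) from ?_]
    · exact Finset.card_image_of_injective _ (fun a b h => (Prod.mk.injEq .. ▸ h).1)
    · ext ⟨x, y⟩
      simp only [Finset.mem_filter, Finset.mem_univ, true_and, Finset.mem_image]
      constructor
      · rintro ⟨rfl, h⟩; exact ⟨x, h, rfl⟩
      · rintro ⟨u, hu, heq⟩
        obtain ⟨h1, h2⟩ := Prod.mk.injEq .. ▸ heq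
        subst h1; subst h2
        exact ⟨rfl, hu⟩
  unfold degP
  rw [hunion, Finset.card_union_of_disjoint hdisj, hcardA, hcardB]
  omega

def Bads (n : ℕ) (ω : Fin n × Fin n → Bool) : Finset (Fin n) :=
  Finset.univ.filter fun v => degP n ω v ≤ 1

/-! ### External/internal arc sets for a set of vertices -/

def extBF (n : ℕ) (S : Finset (Fin n)) (v : Fin n) : Finset (Fin n × Fin n) :=
  Finset.univ.filter fun a => (a.1 = v ∧ a.2 ∉ S) ∨ (a.2 = v ∧ a.1 ∉ S)

lemma extBF_offdiag {n : ℕ} {S : Finset (Fin n)} {v : Fin n} (hv : v ∈ S)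
    {a : Fin n × Fin n} (ha : a ∈ extBF n S v) : ¬ a.1 = a.2 := by
  obtain ⟨-, h⟩ := Finset.mem_filter.1 ha
  intro heq
  rcases h with ⟨h1, h2⟩ | ⟨h1, h2⟩
  · exact h2 (by rw [← heq, h1]; exact hv)
  · exact h2 (by rw [heq, h1]; exact hv)

lemma extBF_card {n : ℕ} {S : Finset (Fin n)} {v : Fin n} (hv : v ∈ S) :
    (extBF n S v).card = 2 * (n - S.card) := by
  have hsplit : extBF n S v
      = (Sᶜ.image fun u => (v, u)) ∪ (Sᶜ.image fun u => (u, v)) := by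
    ext ⟨x, y⟩
    simp only [extBF, Finset.mem_filter, Finset.mem_univ, true_and, Finset.mem_union,
      Finset.mem_image, Finset.mem_compl]
    constructor
    · rintro (⟨rfl, h2⟩ | ⟨rfl, h2⟩)
      · exact Or.inl ⟨y, h2, rfl⟩
      · exact Or.inr ⟨x, h2, rfl⟩
    · rintro (⟨u, hu, heq⟩ | ⟨u, hu, heq⟩) <;>
        · obtain ⟨h1, h2⟩ := Prod.mk.injEq .. ▸ heq
          subst h1; subst h2
          simp [hu]
  have hdisj : Disjoint (Sᶜ.image fun u : Fin n => (v, u)) (Sᶜ.image fun u : Fin n => (u, v)) := by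
    rw [Finset.disjoint_left]
    rintro a ha1 ha2
    obtain ⟨u1, hu1, heq1⟩ := Finset.mem_image.1 ha1
    obtain ⟨u2, hu2, heq2⟩ := Finset.mem_image.1 ha2
    rw [← heq2] at heq1
    obtain ⟨h1, h2⟩ := Prod.mk.injEq .. ▸ heq1
    subst h1
    exact Finset.mem_compl.1 hu1 (h2 ▸ hv)
  rw [hsplit, Finset.card_union_of_disjoint hdisj,
    Finset.card_image_of_injective _ (fun a b h => (Prod.mk.injEq .. ▸ h).2),
    Finset.card_image_of_injective _ (fun a b h => (Prod.mk.injEq .. ▸ h).1),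
    Finset.card_compl]
  simp [two_mul]

lemma extBF_disjoint {n : ℕ} {S : Finset (Fin n)} {u v : Fin n} (hu : u ∈ S) (hv : v ∈ S)
    (huv : u ≠ v) : Disjoint (extBF n S u) (extBF n S v) := by
  rw [Finset.disjoint_left]
  intro a hau hav
  obtain ⟨-, h1⟩ := Finset.mem_filter.1 hau
  obtain ⟨-, h2⟩ := Finset.mem_filter.1 hav
  rcases h1 with ⟨e1, m1⟩ | ⟨e1, m1⟩ <;> rcases h2 with ⟨e2, m2⟩ | ⟨e2, m2⟩
  · exact huv (e1 ▸ e2 ▸ rfl)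
  · exact m2 (e1 ▸ hu)
  · exact m2 (e1 ▸ hu)
  · exact huv (e1 ▸ e2 ▸ rfl)

lemma extBF_not_internal {n : ℕ} {S : Finset (Fin n)} {v : Fin n}
    {a : Fin n × Fin n} (ha : a ∈ extBF n S v) : a ∉ S ×ˢ S := by
  obtain ⟨-, h⟩ := Finset.mem_filter.1 ha
  intro hmem
  obtain ⟨h1, h2⟩ := Finset.mem_product.1 hmem
  rcases h with ⟨-, hm⟩ | ⟨-, hm⟩
  · exact hm h2
  · exact hm h1

def extInd (n : ℕ) (S : Finset (Fin n)) (v : Fin n) (ω : Fin n × Fin n → Bool) : ℝ :=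
  if ((extBF n S v).filter fun a => ω a = true).card ≤ 1 then 1 else 0

def intInd (n : ℕ) (S : Finset (Fin n)) (ω : Fin n × Fin n → Bool) : ℝ :=
  if (∀ a ∈ S ×ˢ S, ω a = false) then 1 else 0

def subInd (n : ℕ) (S : Finset (Fin n)) (ω : Fin n × Fin n → Bool) : ℝ :=
  if S ⊆ Bads n ω then 1 else 0

lemma extInd_meas (n : ℕ) (S : Finset (Fin n)) (v : Fin n) :
    Meas (extBF n S v) (extInd n S v) := by
  intro ω ω' hag
  unfold extInd
  rw [Finset.filter_congr fun a ha => by rw [hag a ha]]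

lemma intInd_meas (n : ℕ) (S : Finset (Fin n)) : Meas (S ×ˢ S) (intInd n S) := by
  intro ω ω' hag
  unfold intInd
  have : (∀ a ∈ S ×ˢ S, ω a = false) ↔ (∀ a ∈ S ×ˢ S, ω' a = false) :=
    ⟨fun h a ha => (hag a ha).symm.trans (h a ha), fun h a ha => (hag a ha).trans (h a ha)⟩
  rw [if_congr this rfl rfl]

def piNK (n k : ℕ) (p : ℝ) : ℝ :=
  (1 - p) ^ (2 * (n - k)) + (2 * (n - k) : ℕ) * (p * (1 - p) ^ (2 * (n - k) - 1))

lemma Ew_extInd {n : ℕ} (p : ℝ) {S : Finset (Fin n)} {v : Fin n} (hv : v ∈ S) :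
    Ew (wgt n p) (extInd n S v) = piNK n S.card p := by
  have hB : ∀ a ∈ extBF n S v, wgt n p a true = p ∧ wgt n p a false = 1 - p := by
    intro a ha
    have hd := extBF_offdiag hv ha
    constructor <;> simp [wgt, hd]
  have := Ew_atMostOne (wgt n p) (wgt_norm n p) (extBF n S v) p hB
  unfold extInd piNK
  rw [this, extBF_card hv]

lemma Ew_intInd {n : ℕ} (p : ℝ) (S : Finset (Fin n)) :
    Ew (wgt n p) (intInd n S) = (1 - p) ^ (S.card * S.card - S.card) := by
  have := Ew_allFalse (wgt n p) (wgt_norm n p) (S ×ˢ S)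
  unfold intInd
  rw [this, ← Finset.prod_filter_mul_prod_filter_not (S ×ˢ S)
    (fun a : Fin n × Fin n => a.1 = a.2) (fun a => wgt n p a false)]
  have h1 : ∏ a ∈ (S ×ˢ S).filter (fun a : Fin n × Fin n => a.1 = a.2),
      wgt n p a false = 1 :=
    Finset.prod_eq_one fun a ha => by
      simp [wgt, (Finset.mem_filter.1 ha).2]
  have h2 : ∏ a ∈ (S ×ˢ S).filter (fun a : Fin n × Fin n => ¬ a.1 = a.2),
      wgt n p a false = (1 - p) ^ (S.card * S.card - S.card) := by
    have heq : (S ×ˢ S).filter (fun a : Fin n × Fin n => ¬ a.1 = a.2) = S.offDiag := by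
      ext a
      simp [Finset.mem_offDiag, Finset.mem_filter, Finset.mem_product]
      tauto
    rw [Finset.prod_congr rfl (fun a ha => ?_), Finset.prod_const, heq,
      Finset.offDiag_card]
    simp [wgt, (Finset.mem_filter.1 ha).2]
  rw [h1, h2, one_mul]

lemma subInd_le_prod {n : ℕ} (S : Finset (Fin n)) (ω : Fin n × Fin n → Bool) :
    subInd n S ω ≤ ∏ v ∈ S, extInd n S v ω := by
  by_cases hS : S ⊆ Bads n ω
  · rw [subInd, if_pos hS]
    refine le_of_eq (Finset.prod_eq_one fun v hv => ?_).symm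
    rw [extInd, if_pos]
    have hsub : (extBF n S v).filter (fun a => ω a = true)
        ⊆ Finset.univ.filter fun a : Fin n × Fin n => (a.1 = v ∨ a.2 = v) ∧ ω a = true := by
      intro a ha
      obtain ⟨haB, haw⟩ := Finset.mem_filter.1 ha
      obtain ⟨-, h⟩ := Finset.mem_filter.1 haB
      refine Finset.mem_filter.2 ⟨Finset.mem_univ a, ?_, haw⟩
      rcases h with ⟨h1, -⟩ | ⟨h1, -⟩
      · exact Or.inl h1
      · exact Or.inr h1
    have hdeg : degP n ω v ≤ 1 := (Finset.mem_filter.1 (hS hv)).2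
    exact le_trans (Finset.card_le_card hsub) hdeg
  · rw [subInd, if_neg hS]
    exact Finset.prod_nonneg fun v _ => by unfold extInd; positivity

lemma prod_mul_intInd_le_subInd {n : ℕ} (S : Finset (Fin n)) (ω : Fin n × Fin n → Bool) :
    intInd n S ω * ∏ v ∈ S, extInd n S v ω ≤ subInd n S ω := by
  have hsub_nonneg : (0:ℝ) ≤ subInd n S ω := by unfold subInd; positivity
  by_cases hI : ∀ a ∈ S ×ˢ S, ω a = false
  · by_cases hall : ∀ v ∈ S, ((extBF n S v).filter fun a => ω a = true).card ≤ 1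
    · have hBad : S ⊆ Bads n ω := by
        intro v hv
        refine Finset.mem_filter.2 ⟨Finset.mem_univ v, ?_⟩
        refine le_trans (Finset.card_le_card ?_) (hall v hv)
        intro a ha
        obtain ⟨-, htouch, haw⟩ := Finset.mem_filter.1 ha
        refine Finset.mem_filter.2 ⟨Finset.mem_filter.2 ⟨Finset.mem_univ a, ?_⟩, haw⟩
        have hna : a ∉ S ×ˢ S := by
          intro hmem
          rw [hI a hmem] at haw
          exact Bool.false_ne_true haw
        rcases htouch with h1 | h1
        · exact Or.inl ⟨h1, fun h2 => hna (Finset.mem_product.2 ⟨by rw [h1]; exact hv, h2⟩)⟩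
        · exact Or.inr ⟨h1, fun h2 => hna (Finset.mem_product.2 ⟨h2, by rw [h1]; exact hv⟩)⟩
      rw [subInd, if_pos hBad, intInd, if_pos hI, one_mul]
      refine le_of_eq (Finset.prod_eq_one fun v hv => ?_)
      rw [extInd, if_pos (hall v hv)]
    · push_neg at hall
      obtain ⟨v, hv, hcard⟩ := hall
      have : ∏ v ∈ S, extInd n S v ω = 0 :=
        Finset.prod_eq_zero hv (by rw [extInd, if_neg (by omega)])
      rw [this, mul_zero]
      exact hsub_nonneg
  · rw [intInd, if_neg hI, zero_mul]
    exact hsub_nonneg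

lemma Ew_subInd_upper {n : ℕ} {p : ℝ} (hp0 : 0 ≤ p) (hp1 : p ≤ 1) (S : Finset (Fin n)) :
    Ew (wgt n p) (subInd n S) ≤ piNK n S.card p ^ S.card := by
  have h1 : Ew (wgt n p) (subInd n S)
      ≤ Ew (wgt n p) (fun ω => ∏ v ∈ S, extInd n S v ω) :=
    Ew_mono (wgt n p) (wgt_nonneg hp0 hp1) (subInd_le_prod S)
  have h2 : Ew (wgt n p) (fun ω => ∏ v ∈ S, extInd n S v ω)
      = ∏ v ∈ S, Ew (wgt n p) (extInd n S v) :=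
    Ew_prod (wgt n p) (wgt_norm n p) S (extBF n S) (extInd n S)
      (fun i hi j hj hij => extBF_disjoint hi hj hij)
      (fun i _ => extInd_meas n S i)
  rw [h2, Finset.prod_congr rfl fun v hv => Ew_extInd p hv, Finset.prod_const] at h1
  exact h1

lemma Ew_subInd_lower {n : ℕ} {p : ℝ} (hp0 : 0 ≤ p) (hp1 : p ≤ 1) (S : Finset (Fin n)) :
    (1 - p) ^ (S.card * S.card - S.card) * piNK n S.card p ^ S.card
      ≤ Ew (wgt n p) (subInd n S) := by
  have h1 : Ew (wgt n p) (fun ω => intInd n S ω * ∏ v ∈ S, extInd n S v ω)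
      ≤ Ew (wgt n p) (subInd n S) :=
    Ew_mono (wgt n p) (wgt_nonneg hp0 hp1) (prod_mul_intInd_le_subInd S)
  have hmeasg : Meas (S ×ˢ S)ᶜ (fun ω => ∏ v ∈ S, extInd n S v ω) := by
    intro ω ω' hag
    refine Finset.prod_congr rfl fun v hv => ?_
    refine extInd_meas n S v ω ω' fun a ha => ?_
    exact hag a (Finset.mem_compl.2 (extBF_not_internal ha))
  have h2 : Ew (wgt n p) (fun ω => intInd n S ω * ∏ v ∈ S, extInd n S v ω)
      = Ew (wgt n p) (intInd n S) * Ew (wgt n p) (fun ω => ∏ v ∈ S, extInd n S v ω) :=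
    Ew_mul (wgt n p) (wgt_norm n p) (S ×ˢ S) _ _ (intInd_meas n S) hmeasg
  have h3 : Ew (wgt n p) (fun ω => ∏ v ∈ S, extInd n S v ω)
      = ∏ v ∈ S, Ew (wgt n p) (extInd n S v) :=
    Ew_prod (wgt n p) (wgt_norm n p) S (extBF n S) (extInd n S)
      (fun i hi j hj hij => extBF_disjoint hi hj hij)
      (fun i _ => extInd_meas n S i)
  rw [h2, h3, Finset.prod_congr rfl fun v hv => Ew_extInd p hv, Finset.prod_const,
    Ew_intInd p S] at h1
  exact h1

/-! ### Bonferroni inequalities -/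

lemma alt_choose_sum {t : ℕ} (m : ℕ) (ht : 1 ≤ t) :
    ∑ k ∈ Finset.range (m+1), (-1:ℝ)^k * (t.choose k) = (-1)^m * ((t-1).choose m) := by
  induction m with
  | zero => simp
  | succ m ih =>
    rw [Finset.sum_range_succ, ih]
    have h : t - 1 + 1 = t := Nat.succ_pred_eq_of_pos ht
    have hp : t.choose (m+1) = (t-1).choose m + (t-1).choose (m+1) := by
      calc t.choose (m+1) = ((t-1)+1).choose (m+1) := by rw [h]
        _ = (t-1).choose m + (t-1).choose (m+1) := Nat.choose_succ_succ _ _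
    rw [hp]
    push_cast
    ring

lemma alt_choose_sum_zero (m : ℕ) :
    ∑ k ∈ Finset.range (m+1), (-1:ℝ)^k * ((0:ℕ).choose k) = 1 := by
  rw [Finset.sum_eq_single_of_mem 0 (Finset.mem_range.2 (Nat.succ_pos m))]
  · simp
  · intro k hk hk0
    rcases Nat.exists_eq_succ_of_ne_zero hk0 with ⟨j, rfl⟩
    simp [Nat.choose]

lemma bonf_even (t m : ℕ) (hm : Even m) :
    (if t = 0 then (1:ℝ) else 0) ≤ ∑ k ∈ Finset.range (m+1), (-1:ℝ)^k * (t.choose k) := by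
  rcases Nat.eq_zero_or_pos t with rfl | ht
  · rw [alt_choose_sum_zero, if_pos rfl]
  · rw [alt_choose_sum m ht, if_neg (by omega), hm.neg_one_pow, one_mul]
    positivity

lemma bonf_odd (t m : ℕ) (hm : Odd m) :
    ∑ k ∈ Finset.range (m+1), (-1:ℝ)^k * (t.choose k) ≤ (if t = 0 then (1:ℝ) else 0) := by
  rcases Nat.eq_zero_or_pos t with rfl | ht
  · rw [alt_choose_sum_zero, if_pos rfl]
  · rw [alt_choose_sum m ht, if_neg (by omega), hm.neg_one_pow, neg_one_mul]
    have : (0:ℝ) ≤ ((t-1).choose m : ℝ) := by positivity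
    linarith

lemma sum_subInd (n k : ℕ) (ω : Fin n × Fin n → Bool) :
    ∑ S ∈ Finset.powersetCard k (Finset.univ : Finset (Fin n)), subInd n S ω
      = (((Bads n ω).card.choose k : ℕ) : ℝ) := by
  unfold subInd
  rw [Finset.sum_boole]
  have heq : (Finset.powersetCard k (Finset.univ : Finset (Fin n))).filter
      (fun S => S ⊆ Bads n ω) = Finset.powersetCard k (Bads n ω) := by
    ext S
    simp only [Finset.mem_filter, Finset.mem_powersetCard]
    constructor
    · rintro ⟨⟨-, hc⟩, hsub⟩
      exact ⟨hsub, hc⟩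
    · rintro ⟨hsub, hc⟩
      exact ⟨⟨Finset.subset_univ S, hc⟩, hsub⟩
  rw [heq, Finset.card_powersetCard]

def Sk (n : ℕ) (p : ℝ) (k : ℕ) : ℝ :=
  ∑ S ∈ Finset.powersetCard k (Finset.univ : Finset (Fin n)), Ew (wgt n p) (subInd n S)

lemma Ew_alt_sum (n : ℕ) (p : ℝ) (m : ℕ) :
    Ew (wgt n p) (fun ω => ∑ k ∈ Finset.range (m+1),
        (-1:ℝ)^k * ∑ S ∈ Finset.powersetCard k (Finset.univ : Finset (Fin n)), subInd n S ω)
      = ∑ k ∈ Finset.range (m+1), (-1:ℝ)^k * Sk n p k := by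
  rw [Ew_sum]
  refine Finset.sum_congr rfl fun k _ => ?_
  rw [Ew_smul, Ew_sum]
  rfl

lemma bonf_Ew_even {n : ℕ} {p : ℝ} (hp0 : 0 ≤ p) (hp1 : p ≤ 1) {m : ℕ} (hm : Even m) :
    Ew (wgt n p) (fun ω => if Bads n ω = ∅ then (1:ℝ) else 0)
      ≤ ∑ k ∈ Finset.range (m+1), (-1:ℝ)^k * Sk n p k := by
  rw [← Ew_alt_sum n p m]
  refine Ew_mono (wgt n p) (wgt_nonneg hp0 hp1) fun ω => ?_
  have h1 : (if Bads n ω = ∅ then (1:ℝ) else 0)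
      = (if (Bads n ω).card = 0 then (1:ℝ) else 0) := by
    rw [if_congr Finset.card_eq_zero.symm rfl rfl]
  rw [h1, Finset.sum_congr rfl fun k _ => by rw [sum_subInd n k ω]]
  exact bonf_even (Bads n ω).card m hm

lemma bonf_Ew_odd {n : ℕ} {p : ℝ} (hp0 : 0 ≤ p) (hp1 : p ≤ 1) {m : ℕ} (hm : Odd m) :
    ∑ k ∈ Finset.range (m+1), (-1:ℝ)^k * Sk n p k
      ≤ Ew (wgt n p) (fun ω => if Bads n ω = ∅ then (1:ℝ) else 0) := by
  rw [← Ew_alt_sum n p m]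
  refine Ew_mono (wgt n p) (wgt_nonneg hp0 hp1) fun ω => ?_
  have h1 : (if Bads n ω = ∅ then (1:ℝ) else 0)
      = (if (Bads n ω).card = 0 then (1:ℝ) else 0) := by
    rw [if_congr Finset.card_eq_zero.symm rfl rfl]
  rw [h1, Finset.sum_congr rfl fun k _ => by rw [sum_subInd n k ω]]
  exact bonf_odd (Bads n ω).card m hm

/-! ### The main event in terms of `Bads` -/

lemma probDnp_main (n : ℕ) (p : ℝ) :
    probDnp n p (fun D => ∀ v : Fin n, 2 ≤ inDeg n D v + outDeg n D v)
      = Ew (wgt n p) (fun ω => if Bads n ω = ∅ then (1:ℝ) else 0) := by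
  rw [probDnp_eq]
  unfold Ew
  refine Finset.sum_congr rfl fun ω _ => ?_
  by_cases hL : ∀ i : Fin n, ω (i, i) = false
  · have hDL : Loopless n (fun i j => ω (i, j)) := hL
    have hω : (fun a : Fin n × Fin n => ω (a.1, a.2)) = ω :=
      funext fun a => congrArg ω (Prod.mk.eta)
    have hdeg : ∀ v, inDeg n (fun i j => ω (i, j)) v + outDeg n (fun i j => ω (i, j)) v
        = degP n ω v := by
      intro v
      have h := deg_eq hDL v
      rwa [hω] at h
    have hiff : (∀ v : Fin n, 2 ≤ inDeg n (fun i j => ω (i, j)) v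
        + outDeg n (fun i j => ω (i, j)) v) ↔ Bads n ω = ∅ := by
      unfold Bads
      rw [Finset.filter_eq_empty_iff]
      constructor
      · intro h v _
        have := h v
        rw [hdeg v] at this
        omega
      · intro h v
        have := h (Finset.mem_univ v)
        rw [hdeg v]
        omega
    dsimp only
    congr 1
    simp only [hiff]
  · push_neg at hL
    obtain ⟨i, hi⟩ := hL
    have hi' : ω (i, i) = true := by
      cases h : ω (i, i)
      · exact absurd h hi
      · rfl
    have h0 : (∏ a : Fin n × Fin n, wgt n p a (ω a)) = 0 :=
      Finset.prod_eq_zero (Finset.mem_univ (i, i)) (by simp [wgt, hi'])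
    rw [h0, zero_mul, zero_mul]

/-! ### Bounds on `Sk` -/

lemma Sk_upper {n : ℕ} {p : ℝ} (hp0 : 0 ≤ p) (hp1 : p ≤ 1) (k : ℕ) :
    Sk n p k ≤ (n.choose k : ℝ) * piNK n k p ^ k := by
  unfold Sk
  calc ∑ S ∈ Finset.powersetCard k (Finset.univ : Finset (Fin n)), Ew (wgt n p) (subInd n S)
      ≤ ∑ S ∈ Finset.powersetCard k (Finset.univ : Finset (Fin n)), piNK n k p ^ k := by
        refine Finset.sum_le_sum fun S hS => ?_
        have hc : S.card = k := (Finset.mem_powersetCard.1 hS).2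
        have := Ew_subInd_upper hp0 hp1 S
        rwa [hc] at this
    _ = (n.choose k : ℝ) * piNK n k p ^ k := by
        rw [Finset.sum_const, Finset.card_powersetCard, nsmul_eq_mul]
        simp

lemma Sk_lower {n : ℕ} {p : ℝ} (hp0 : 0 ≤ p) (hp1 : p ≤ 1) (k : ℕ) :
    (n.choose k : ℝ) * ((1 - p) ^ (k * k - k) * piNK n k p ^ k) ≤ Sk n p k := by
  unfold Sk
  calc (n.choose k : ℝ) * ((1 - p) ^ (k * k - k) * piNK n k p ^ k)
      = ∑ _S ∈ Finset.powersetCard k (Finset.univ : Finset (Fin n)),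
          (1 - p) ^ (k * k - k) * piNK n k p ^ k := by
        rw [Finset.sum_const, Finset.card_powersetCard, nsmul_eq_mul]
        simp
    _ ≤ _ := by
        refine Finset.sum_le_sum fun S hS => ?_
        have hc : S.card = k := (Finset.mem_powersetCard.1 hS).2
        have := Ew_subInd_lower hp0 hp1 S
        rwa [hc] at this

/-! ### Analytic preliminaries -/

def Lf (c : ℝ) (n : ℕ) : ℝ := Real.log n + Real.log (Real.log n) + c

def pf (c : ℝ) (n : ℕ) : ℝ := Lf c n / (2 * n)

lemma tendsto_log_nat : Tendsto (fun n : ℕ => Real.log n) atTop atTop :=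
  Real.tendsto_log_atTop.comp tendsto_natCast_atTop_atTop

lemma tendsto_loglog_nat : Tendsto (fun n : ℕ => Real.log (Real.log n)) atTop atTop :=
  Real.tendsto_log_atTop.comp tendsto_log_nat

lemma t_logdiv : Tendsto (fun n : ℕ => Real.log n / n) atTop (𝓝 0) := by
  have h := Real.tendsto_pow_log_div_mul_add_atTop 1 0 1 one_ne_zero
  have h2 : Tendsto (fun x : ℝ => Real.log x / x) atTop (𝓝 0) := by
    refine h.congr fun x => ?_
    simp
  exact h2.comp tendsto_natCast_atTop_atTop

lemma t_log2div : Tendsto (fun n : ℕ => (Real.log n)^2 / n) atTop (𝓝 0) := by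
  have h := Real.tendsto_pow_log_div_mul_add_atTop 1 0 2 one_ne_zero
  have h2 : Tendsto (fun x : ℝ => (Real.log x)^2 / x) atTop (𝓝 0) := by
    refine h.congr fun x => ?_
    simp
  exact h2.comp tendsto_natCast_atTop_atTop

lemma t_loglogdivlog : Tendsto (fun n : ℕ => Real.log (Real.log n) / Real.log n) atTop (𝓝 0) := by
  have h := Real.tendsto_pow_log_div_mul_add_atTop 1 0 1 one_ne_zero
  have h2 : Tendsto (fun x : ℝ => Real.log x / x) atTop (𝓝 0) := by
    refine h.congr fun x => ?_
    simp
  exact h2.comp tendsto_log_nat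

lemma ev_L_le (c : ℝ) : ∀ᶠ n : ℕ in atTop, |Lf c n| ≤ 3 * Real.log n := by
  filter_upwards [tendsto_log_nat.eventually_ge_atTop (max 1 |c|),
    tendsto_loglog_nat.eventually_ge_atTop 0] with n h1 h2
  have hl1 : (1:ℝ) ≤ Real.log n := le_trans (le_max_left _ _) h1
  have hlc : |c| ≤ Real.log n := le_trans (le_max_right _ _) h1
  have hll : Real.log (Real.log n) ≤ Real.log n :=
    le_trans (Real.log_le_self (by linarith)) le_rfl
  rw [abs_le]
  constructor
  · have := neg_abs_le c
    unfold Lf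
    nlinarith [abs_nonneg c]
  · unfold Lf
    have := le_abs_self c
    nlinarith

lemma tendsto_pf (c : ℝ) : Tendsto (pf c) atTop (𝓝 0) := by
  apply squeeze_zero_norm' (a := fun n : ℕ => (3/2) * (Real.log n / n))
  · filter_upwards [ev_L_le c, eventually_ge_atTop 1] with n h1 hn1
    have hn : (1:ℝ) ≤ (n:ℝ) := by exact_mod_cast hn1
    have hlog : 0 ≤ Real.log n := Real.log_nonneg hn
    rw [pf, Real.norm_eq_abs, abs_div]
    rw [abs_of_nonneg (by positivity : (0:ℝ) ≤ 2 * n)]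
    rw [div_le_iff₀ (by positivity)]
    calc |Lf c n| ≤ 3 * Real.log n := h1
      _ = 3/2 * (Real.log n / n) * (2 * n) := by field_simp
  · have := t_logdiv.const_mul (3/2 : ℝ)
    simpa using this

lemma ev_good (c : ℝ) : ∀ᶠ n : ℕ in atTop,
    (1:ℝ) ≤ Real.log n ∧ 0 ≤ Real.log (Real.log n) ∧ 1 ≤ Lf c n ∧ |Lf c n| ≤ 3 * Real.log n
      ∧ 0 < pf c n ∧ pf c n ≤ 1/2 ∧ 1 ≤ n := by
  have h1 := tendsto_log_nat.eventually_ge_atTop (1:ℝ)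
  have h2 := tendsto_loglog_nat.eventually_ge_atTop (0:ℝ)
  have h3 : ∀ᶠ n : ℕ in atTop, 1 ≤ Lf c n :=
    (tendsto_atTop_add_const_right atTop c
      (Tendsto.atTop_add_atTop tendsto_log_nat tendsto_loglog_nat)).eventually_ge_atTop 1
  have h4 := ev_L_le c
  have h6 : ∀ᶠ n : ℕ in atTop, pf c n ≤ 1/2 := by
    filter_upwards [(tendsto_pf c).eventually (eventually_le_nhds (by norm_num : (0:ℝ) < 1/2))]
      with n hn using hn
  have h7 := eventually_ge_atTop 1
  filter_upwards [h1, h2, h3, h4, h6, h7] with n e1 e2 e3 e4 e6 e7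
  refine ⟨e1, e2, e3, e4, ?_, e6, e7⟩
  have hn : (1:ℝ) ≤ (n:ℝ) := by exact_mod_cast e7
  rw [pf]
  positivity

lemma two_n_pf {c : ℝ} {n : ℕ} (hn : 1 ≤ n) : 2 * (n:ℝ) * pf c n = Lf c n := by
  have hn' : (0:ℝ) < n := by exact_mod_cast hn
  rw [pf]
  field_simp

lemma tendsto_E1 (c : ℝ) :
    Tendsto (fun n : ℕ => Lf c n + 2 * (n:ℝ) * Real.log (1 - pf c n)) atTop (𝓝 0) := by
  apply squeeze_zero_norm' (a := fun n : ℕ => 9 * ((Real.log n)^2 / n))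
  · filter_upwards [ev_good c] with n ⟨e1, e2, e3, e4, e5, e6, e7⟩
    have hn : (1:ℝ) ≤ (n:ℝ) := by exact_mod_cast e7
    have hx : |pf c n| < 1 := by rw [abs_of_pos e5]; linarith
    have hb := Real.abs_log_sub_add_sum_range_le hx 1
    have hsum : (∑ i ∈ Finset.range 1, (pf c n) ^ (i+1) / ((i:ℝ)+1)) = pf c n := by simp
    rw [hsum] at hb
    have hb2 : |pf c n + Real.log (1 - pf c n)| ≤ 2 * (pf c n)^2 := by
      have habs : |pf c n| = pf c n := abs_of_pos e5
      rw [habs] at hb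
      have hden : (1:ℝ)/2 ≤ 1 - pf c n := by linarith
      have h0 : (pf c n)^(1+1) / (1 - pf c n) ≤ 2 * (pf c n)^2 := by
        rw [div_le_iff₀ (by linarith)]
        have hpow : pf c n ^ (1+1) = pf c n ^ 2 := by norm_num
        rw [hpow]
        nlinarith [mul_nonneg (sq_nonneg (pf c n)) (by linarith : (0:ℝ) ≤ 1 - 2 * pf c n)]
      exact le_trans hb h0
    have hkey : Lf c n + 2 * (n:ℝ) * Real.log (1 - pf c n)
        = 2 * (n:ℝ) * (pf c n + Real.log (1 - pf c n)) := by
      rw [mul_add, two_n_pf e7]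
    rw [hkey, Real.norm_eq_abs, abs_mul, abs_of_nonneg (by positivity : (0:ℝ) ≤ 2 * (n:ℝ))]
    calc 2 * (n:ℝ) * |pf c n + Real.log (1 - pf c n)|
        ≤ 2 * (n:ℝ) * (2 * (pf c n)^2) := by
          exact mul_le_mul_of_nonneg_left hb2 (by positivity)
      _ = (Lf c n)^2 / n := by
          rw [pf]
          have hn0 : (n:ℝ) ≠ 0 := by positivity
          field_simp
      _ ≤ 9 * ((Real.log n)^2 / n) := by
          rw [div_le_iff₀ (by positivity : (0:ℝ) < (n:ℝ))]
          have h2 : (Lf c n)^2 ≤ (3 * Real.log n)^2 := by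
            have := sq_abs (Lf c n)
            nlinarith [abs_nonneg (Lf c n)]
          calc (Lf c n)^2 ≤ (3 * Real.log n)^2 := h2
            _ = 9 * (Real.log n)^2 := by ring
            _ = 9 * ((Real.log n)^2 / n) * n := by field_simp
  · simpa using t_log2div.const_mul (9:ℝ)

lemma tendsto_logq (c : ℝ) : Tendsto (fun n : ℕ => Real.log (1 - pf c n)) atTop (𝓝 0) := by
  have h1 : Tendsto (fun n : ℕ => 1 - pf c n) atTop (𝓝 1) := by
    simpa using (tendsto_const_nhds (x := (1:ℝ))).sub (tendsto_pf c)
  have h2 := (Real.continuousAt_log one_ne_zero).tendsto.comp h1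
  simpa [Function.comp_def] using h2

lemma tendsto_n_piNK (c : ℝ) (k : ℕ) :
    Tendsto (fun n : ℕ => (n:ℝ) * piNK n k (pf c n)) atTop (𝓝 (Real.exp (-c))) := by
  set g : ℕ → ℝ := fun n =>
    (Lf c n + 2 * (n:ℝ) * Real.log (1 - pf c n))
      - (2 * (k:ℝ) + 1) * Real.log (1 - pf c n)
      + (Real.log ((1 - pf c n) + (Lf c n - 2 * (k:ℝ) * pf c n)) - Real.log (Real.log n))
      + (-c) with hg
  have hev2kp : ∀ᶠ n : ℕ in atTop, 2 * (k:ℝ) * pf c n ≤ 1/2 := by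
    have h2kp : Tendsto (fun n : ℕ => 2 * (k:ℝ) * pf c n) atTop (𝓝 0) := by
      simpa using (tendsto_pf c).const_mul (2 * (k:ℝ))
    filter_upwards [h2kp.eventually (eventually_le_nhds (by norm_num : (0:ℝ) < 1/2))]
      with n hn using hn
  have hApos : ∀ᶠ n : ℕ in atTop,
      0 < (1 - pf c n) + (Lf c n - 2 * (k:ℝ) * pf c n) := by
    filter_upwards [ev_good c, hev2kp] with n e h2
    obtain ⟨e1, e2, e3, e4, e5, e6, e7⟩ := e
    linarith
  -- limit of the log-ratio part
  have hA : Tendsto (fun n : ℕ =>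
      Real.log ((1 - pf c n) + (Lf c n - 2 * (k:ℝ) * pf c n)) - Real.log (Real.log n))
      atTop (𝓝 0) := by
    have hratio : Tendsto (fun n : ℕ =>
        ((1 - pf c n) + (Lf c n - 2 * (k:ℝ) * pf c n)) / Real.log n) atTop (𝓝 1) := by
      have h2 : Tendsto (fun n : ℕ => c + (1 - pf c n) - 2 * (k:ℝ) * pf c n)
          atTop (𝓝 (c + 1)) := by
        have := ((tendsto_pf c).const_mul (2 * (k:ℝ)))
        have h1m : Tendsto (fun n : ℕ => 1 - pf c n) atTop (𝓝 1) := by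
          simpa using (tendsto_const_nhds (x := (1:ℝ))).sub (tendsto_pf c)
        have := ((tendsto_const_nhds (x := c)).add h1m).sub this
        simpa using this
      have h3 : Tendsto (fun n : ℕ =>
          (c + (1 - pf c n) - 2 * (k:ℝ) * pf c n) / Real.log n) atTop (𝓝 0) :=
        h2.div_atTop tendsto_log_nat
      have hcomb : Tendsto (fun n : ℕ =>
          1 + (Real.log (Real.log n) / Real.log n
            + (c + (1 - pf c n) - 2 * (k:ℝ) * pf c n) / Real.log n)) atTop (𝓝 1) := by
        have := (t_loglogdivlog.add h3)
        have h4 := (tendsto_const_nhds (x := (1:ℝ))).add this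
        simpa using h4
      refine Tendsto.congr' ?_ hcomb
      filter_upwards [ev_good c] with n e
      obtain ⟨e1, e2, e3, e4, e5, e6, e7⟩ := e
      have hlogne : Real.log n ≠ 0 := by linarith
      rw [Lf]
      field_simp
      ring
    have hlogratio : Tendsto (fun n : ℕ =>
        Real.log (((1 - pf c n) + (Lf c n - 2 * (k:ℝ) * pf c n)) / Real.log n))
        atTop (𝓝 0) := by
      have := (Real.continuousAt_log one_ne_zero).tendsto.comp hratio
      simpa [Function.comp_def] using this
    refine Tendsto.congr' ?_ hlogratio
    filter_upwards [hApos, ev_good c] with n hpos e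
    obtain ⟨e1, e2, e3, e4, e5, e6, e7⟩ := e
    rw [Real.log_div (ne_of_gt hpos) (by linarith)]
  have hgt : Tendsto g atTop (𝓝 (0 - (2 * (k:ℝ) + 1) * 0 + 0 + -c)) := by
    rw [hg]
    exact (((tendsto_E1 c).sub ((tendsto_logq c).const_mul (2 * (k:ℝ) + 1))).add hA).add
      tendsto_const_nhds
  have hgt' : Tendsto g atTop (𝓝 (-c)) := by
    have : (0 : ℝ) - (2 * (k:ℝ) + 1) * 0 + 0 + -c = -c := by ring
    rwa [this] at hgt
  have hexp : Tendsto (fun n => Real.exp (g n)) atTop (𝓝 (Real.exp (-c))) :=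
    (Real.continuous_exp.tendsto (-c)).comp hgt'
  refine Tendsto.congr' ?_ hexp
  -- eventual identity
  filter_upwards [ev_good c, hApos, eventually_ge_atTop (k+1)] with n e hpos hnk
  obtain ⟨e1, e2, e3, e4, e5, e6, e7⟩ := e
  have hkn : k ≤ n := le_trans (Nat.le_succ k) hnk
  have hncast : (1:ℝ) ≤ (n:ℝ) := by exact_mod_cast e7
  set p := pf c n with hp
  set q : ℝ := 1 - p with hq
  have hq0 : 0 < q := by rw [hq]; linarith
  set m : ℕ := 2 * (n - k) with hm
  have hm1 : 1 ≤ m := by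
    rw [hm]; omega
  have hmc : ((m:ℕ):ℝ) = 2 * ((n:ℝ) - (k:ℝ)) := by
    rw [hm]
    push_cast [Nat.cast_sub hkn]
    ring
  have hA2 : Lf c n - 2 * (k:ℝ) * p = 2 * ((n:ℝ) - (k:ℝ)) * p := by
    have := two_n_pf (c := c) e7
    rw [← hp] at this
    rw [← this]
    ring
  have hApos' : 0 < q + 2 * ((n:ℝ) - (k:ℝ)) * p := by
    rw [← hA2]
    exact hpos
  -- g n equals the log of n * piNK
  have hgn : g n = Real.log n + (2 * ((n:ℝ) - (k:ℝ)) - 1) * Real.log q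
      + Real.log (q + 2 * ((n:ℝ) - (k:ℝ)) * p) := by
    rw [hg]
    dsimp only
    rw [hA2]
    simp only [Lf, ← hp, ← hq]
    ring
  have hexpand : Real.exp (g n) = (n:ℝ) * (q ^ (m - 1) * (q + 2 * ((n:ℝ) - (k:ℝ)) * p)) := by
    rw [hgn, Real.exp_add, Real.exp_add]
    have h1 : Real.exp (Real.log n) = (n:ℝ) := Real.exp_log (by linarith)
    have h3 : Real.exp (Real.log (q + 2 * ((n:ℝ) - (k:ℝ)) * p)) = _ := Real.exp_log hApos'
    have h2 : Real.exp ((2 * ((n:ℝ) - (k:ℝ)) - 1) * Real.log q) = q ^ (m - 1) := by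
      have hc2 : (2 * ((n:ℝ) - (k:ℝ)) - 1) = ((m - 1 : ℕ) : ℝ) := by
        rw [Nat.cast_sub hm1, hmc]
        norm_num
      rw [hc2, Real.exp_nat_mul, Real.exp_log hq0]
    rw [h1, h2, h3]
    ring
  have hqm : q ^ (m - 1) * q = q ^ m := by
    rw [← pow_succ]
    congr 1
    omega
  have hfin : piNK n k p = q ^ (m - 1) * (q + 2 * ((n:ℝ) - (k:ℝ)) * p) := by
    unfold piNK
    rw [← hq, ← hm, hmc, mul_add, hqm]
    ring
  rw [hexpand, hfin]

/-! ### Limits of `Sk` -/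

lemma tendsto_choose_div (k : ℕ) :
    Tendsto (fun n : ℕ => (n.choose k : ℝ) / (n:ℝ)^k) atTop (𝓝 (1 / (k.factorial : ℝ))) := by
  have hprod : Tendsto (fun n : ℕ => ∏ i ∈ Finset.range k, (((n:ℝ) - i) / n)) atTop (𝓝 1) := by
    have h1 : ∀ i ∈ Finset.range k, Tendsto (fun n : ℕ => ((n:ℝ) - i) / n) atTop (𝓝 1) := by
      intro i _
      have hev : ∀ᶠ n : ℕ in atTop, (1 : ℝ) - (i:ℝ) * (1/(n:ℝ)) = ((n:ℝ) - i) / n := by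
        filter_upwards [eventually_ge_atTop 1] with n hn
        have hn0 : (n:ℝ) ≠ 0 := by
          have : (1:ℝ) ≤ (n:ℝ) := by exact_mod_cast hn
          linarith
        field_simp
      have ht : Tendsto (fun n : ℕ => (1:ℝ) - (i:ℝ) * (1/(n:ℝ))) atTop (𝓝 1) := by
        have h2 := tendsto_one_div_atTop_nhds_zero_nat.const_mul (i:ℝ)
        have h3 := (tendsto_const_nhds (x := (1:ℝ))).sub h2
        simpa using h3
      exact Tendsto.congr' hev ht
    have h := tendsto_finset_prod (Finset.range k) h1
    simpa using h
  have hev : ∀ᶠ n : ℕ in atTop,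
      (∏ i ∈ Finset.range k, (((n:ℝ) - i) / n)) * (1 / (k.factorial:ℝ))
        = (n.choose k : ℝ) / (n:ℝ)^k := by
    filter_upwards [eventually_ge_atTop (max k 1)] with n hn
    have hkn : k ≤ n := le_trans (le_max_left _ _) hn
    have hn1 : 1 ≤ n := le_trans (le_max_right _ _) hn
    have hn0 : (n:ℝ) ≠ 0 := by
      have : (1:ℝ) ≤ (n:ℝ) := by exact_mod_cast hn1
      linarith
    have hdesc : ((n.descFactorial k : ℕ) : ℝ) = ∏ i ∈ Finset.range k, ((n:ℝ) - i) := by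
      rw [Nat.descFactorial_eq_prod_range, Nat.cast_prod]
      refine Finset.prod_congr rfl fun i hi => ?_
      have hik : i ≤ n := le_trans (le_of_lt (Finset.mem_range.1 hi)) hkn
      rw [Nat.cast_sub hik]
    have hch : (k.factorial : ℝ) * (n.choose k : ℝ) = ∏ i ∈ Finset.range k, ((n:ℝ) - i) := by
      rw [← hdesc, Nat.descFactorial_eq_factorial_mul_choose]
      push_cast
      ring
    have hnk : ((n:ℝ))^k = ∏ _i ∈ Finset.range k, (n:ℝ) := by
      rw [Finset.prod_const, Finset.card_range]
    have hfac : (k.factorial : ℝ) ≠ 0 := by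
      exact_mod_cast k.factorial_ne_zero
    rw [Finset.prod_div_distrib, ← hnk, ← hch]
    field_simp
  have h := hprod.mul (tendsto_const_nhds (x := 1/(k.factorial:ℝ)))
  rw [one_mul] at h
  exact Tendsto.congr' hev h

lemma tendsto_Sk (c : ℝ) (k : ℕ) :
    Tendsto (fun n : ℕ => Sk n (pf c n) k) atTop
      (𝓝 (Real.exp (-c) ^ k / (k.factorial : ℝ))) := by
  have hhi : Tendsto (fun n : ℕ => (n.choose k : ℝ) * piNK n k (pf c n) ^ k) atTop
      (𝓝 (Real.exp (-c) ^ k / (k.factorial : ℝ))) := by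
    have h1 := (tendsto_choose_div k).mul ((tendsto_n_piNK c k).pow k)
    have hlim : 1 / (k.factorial:ℝ) * Real.exp (-c) ^ k
        = Real.exp (-c) ^ k / (k.factorial : ℝ) := by ring
    rw [hlim] at h1
    refine Tendsto.congr' ?_ h1
    filter_upwards [eventually_ge_atTop 1] with n hn
    have hn0 : (n:ℝ) ≠ 0 := by
      have : (1:ℝ) ≤ (n:ℝ) := by exact_mod_cast hn
      linarith
    rw [mul_pow]
    field_simp
  have hq1pow : Tendsto (fun n : ℕ => (1 - pf c n) ^ (k*k - k)) atTop (𝓝 1) := by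
    have h1 : Tendsto (fun n : ℕ => 1 - pf c n) atTop (𝓝 1) := by
      simpa using (tendsto_const_nhds (x := (1:ℝ))).sub (tendsto_pf c)
    have := h1.pow (k*k - k)
    simpa using this
  have hlo : Tendsto (fun n : ℕ =>
      (n.choose k : ℝ) * ((1 - pf c n) ^ (k*k - k) * piNK n k (pf c n) ^ k)) atTop
      (𝓝 (Real.exp (-c) ^ k / (k.factorial : ℝ))) := by
    have h := hq1pow.mul hhi
    rw [one_mul] at h
    refine h.congr fun n => ?_
    ring
  refine tendsto_of_tendsto_of_tendsto_of_le_of_le' hlo hhi ?_ ?_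
  · filter_upwards [ev_good c] with n e
    obtain ⟨e1, e2, e3, e4, e5, e6, e7⟩ := e
    exact Sk_lower (le_of_lt e5) (by linarith) k
  · filter_upwards [ev_good c] with n e
    obtain ⟨e1, e2, e3, e4, e5, e6, e7⟩ := e
    exact Sk_upper (le_of_lt e5) (by linarith) k

lemma Ew_ind_bounds {n : ℕ} {p : ℝ} (hp0 : 0 ≤ p) (hp1 : p ≤ 1) :
    0 ≤ Ew (wgt n p) (fun ω => if Bads n ω = ∅ then (1:ℝ) else 0)
      ∧ Ew (wgt n p) (fun ω => if Bads n ω = ∅ then (1:ℝ) else 0) ≤ 1 := by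
  constructor
  · have h0 : Ew (wgt n p) (fun _ => 0) = 0 := by
      simp [Ew]
    rw [← h0]
    exact Ew_mono (wgt n p) (wgt_nonneg hp0 hp1) fun ω => by positivity
  · calc Ew (wgt n p) (fun ω => if Bads n ω = ∅ then (1:ℝ) else 0)
        ≤ Ew (wgt n p) (fun _ => (1:ℝ)) := by
          refine Ew_mono (wgt n p) (wgt_nonneg hp0 hp1) fun ω => ?_
          by_cases h : Bads n ω = ∅ <;> simp [h]
      _ = 1 := Ew_one (wgt n p) (wgt_norm n p)

lemma tendsto_TT (x : ℝ) :
    Tendsto (fun m : ℕ => ∑ k ∈ Finset.range (m+1), x ^ k / (k.factorial : ℝ)) atTop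
      (𝓝 (Real.exp x)) := by
  have h : HasSum (fun k : ℕ => x ^ k / (k.factorial : ℝ)) (Real.exp x) := by
    rw [Real.exp_eq_exp_ℝ]
    exact NormedSpace.expSeries_div_hasSum_exp x
  exact h.tendsto_sum_nat.comp (tendsto_add_atTop_nat 1)

lemma main_tendsto (c : ℝ) :
    Tendsto (fun n : ℕ => Ew (wgt n (pf c n))
        (fun ω => if Bads n ω = ∅ then (1:ℝ) else 0))
      atTop (𝓝 (Real.exp (-Real.exp (-c)))) := by
  set lam := Real.exp (-c) with hlam
  set P : ℕ → ℝ := fun n => Ew (wgt n (pf c n))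
    (fun ω => if Bads n ω = ∅ then (1:ℝ) else 0) with hP
  have hple : ∀ᶠ n : ℕ in atTop, P n ≤ 1 := by
    filter_upwards [ev_good c] with n e
    obtain ⟨e1, e2, e3, e4, e5, e6, e7⟩ := e
    exact (Ew_ind_bounds (le_of_lt e5) (by linarith)).2
  have hpge : ∀ᶠ n : ℕ in atTop, 0 ≤ P n := by
    filter_upwards [ev_good c] with n e
    obtain ⟨e1, e2, e3, e4, e5, e6, e7⟩ := e
    exact (Ew_ind_bounds (le_of_lt e5) (by linarith)).1
  have hBU : atTop.IsBoundedUnder (· ≤ ·) P := isBoundedUnder_of_eventually_le hple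
  have hBU' : atTop.IsBoundedUnder (· ≥ ·) P := isBoundedUnder_of_eventually_ge hpge
  have hSksum : ∀ m : ℕ, Tendsto (fun n : ℕ => ∑ k ∈ Finset.range (m+1),
      (-1:ℝ)^k * Sk n (pf c n) k) atTop
      (𝓝 (∑ k ∈ Finset.range (m+1), (-1:ℝ)^k * (lam^k / (k.factorial:ℝ)))) :=
    fun m => tendsto_finset_sum _ fun k _ => (tendsto_Sk c k).const_mul _
  have hTT : Tendsto (fun m : ℕ => ∑ k ∈ Finset.range (m+1),
      (-1:ℝ)^k * (lam^k / (k.factorial:ℝ))) atTop (𝓝 (Real.exp (-lam))) := by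
    have h := tendsto_TT (-lam)
    refine h.congr fun m => ?_
    refine Finset.sum_congr rfl fun k _ => ?_
    rw [neg_pow]
    ring
  have hup : ∀ j : ℕ, limsup P atTop
      ≤ ∑ k ∈ Finset.range (2*j+1), (-1:ℝ)^k * (lam^k / (k.factorial:ℝ)) := by
    intro j
    have hev : P ≤ᶠ[atTop] fun n : ℕ => ∑ k ∈ Finset.range (2*j+1),
        (-1:ℝ)^k * Sk n (pf c n) k := by
      filter_upwards [ev_good c] with n e
      obtain ⟨e1, e2, e3, e4, e5, e6, e7⟩ := e
      exact bonf_Ew_even (le_of_lt e5) (by linarith) (even_two_mul j)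
    calc limsup P atTop
        ≤ limsup (fun n : ℕ => ∑ k ∈ Finset.range (2*j+1),
            (-1:ℝ)^k * Sk n (pf c n) k) atTop :=
          limsup_le_limsup hev (IsBoundedUnder.isCoboundedUnder_le hBU')
            (hSksum (2*j)).isBoundedUnder_le
      _ = _ := (hSksum (2*j)).limsup_eq
  have hlow : ∀ j : ℕ,
      ∑ k ∈ Finset.range (2*j+1+1), (-1:ℝ)^k * (lam^k / (k.factorial:ℝ))
        ≤ liminf P atTop := by
    intro j
    have hev : (fun n : ℕ => ∑ k ∈ Finset.range (2*j+1+1),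
        (-1:ℝ)^k * Sk n (pf c n) k) ≤ᶠ[atTop] P := by
      filter_upwards [ev_good c] with n e
      obtain ⟨e1, e2, e3, e4, e5, e6, e7⟩ := e
      exact bonf_Ew_odd (le_of_lt e5) (by linarith) (odd_two_mul_add_one j)
    calc ∑ k ∈ Finset.range (2*j+1+1), (-1:ℝ)^k * (lam^k / (k.factorial:ℝ))
        = liminf (fun n : ℕ => ∑ k ∈ Finset.range (2*j+1+1),
            (-1:ℝ)^k * Sk n (pf c n) k) atTop := ((hSksum (2*j+1)).liminf_eq).symm
      _ ≤ liminf P atTop :=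
          liminf_le_liminf hev (hSksum (2*j+1)).isBoundedUnder_ge
            (IsBoundedUnder.isCoboundedUnder_ge hBU)
  have h2j : Tendsto (fun j : ℕ => 2*j) atTop atTop :=
    tendsto_atTop_atTop_of_monotone (fun a b h => by omega) (fun b => ⟨b, by omega⟩)
  have h2j1 : Tendsto (fun j : ℕ => 2*j+1) atTop atTop :=
    tendsto_atTop_atTop_of_monotone (fun a b h => by omega) (fun b => ⟨b, by omega⟩)
  have hsup_final : limsup P atTop ≤ Real.exp (-lam) :=
    ge_of_tendsto (hTT.comp h2j) (Eventually.of_forall hup)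
  have hinf_final : Real.exp (-lam) ≤ liminf P atTop :=
    le_of_tendsto (hTT.comp h2j1) (Eventually.of_forall hlow)
  exact tendsto_of_le_liminf_of_limsup_le hinf_final hsup_final hBU hBU'

end Stmt7Aux

/-- for `p = (log n + log log n + c)/(2n)`, the probability that every vertex
of `D_{n,p}` has total degree at least `2` tends to `exp (-exp (-c))` as `n → ∞`. -/
theorem stmt_7 (c : ℝ) :
    Tendsto
      (fun n : ℕ =>
        probDnp n ((Real.log n + Real.log (Real.log n) + c) / (2 * n))
          (fun D => ∀ v : Fin n, 2 ≤ inDeg n D v + outDeg n D v))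
      atTop (𝓝 (Real.exp (-Real.exp (-c)))) := by
  have h := Stmt7Aux.main_tendsto c
  refine Tendsto.congr ?_ h
  intro n
  exact (Stmt7Aux.probDnp_main n (Stmt7Aux.pf c n)).symm

end
end

section
/- Fix k ≥ 3 and let D be any digraph with D_{n,p_−} ⊆ D ⊆ D_{n,p_+} satisfying properties H1, H2 and H3. Let 𝒫_0 be any collection of pairwise vertex-disjoint paths in D, each of length at most 6k+2 and each containing exactly one non-good vertex. Then: (H4) for every dangerous vertex v, every neighbour of v in D is good and is not contained in any path of 𝒫_0; and (H5) for every vertex v, all but at most 4k of the neighbours of v in D are good and are not contained in any path of 𝒫_0. -/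
open Classical Filter Topology MeasureTheory

noncomputable section

/-- Sample space for the coupled random digraph process: one independent uniform-`[0,1]`
variable for each potential arc `(u, w)` and each label (`false` = "in", `true` = "out").
The arc `u → w` is present in `D^in_{n,p'}` iff `ω (u, w, false) ≤ p'`, and in
`D^out_{n,p'}` iff `ω (u, w, true) ≤ p'`. -/
abbrev OmegaT (n : ℕ) := Fin n × Fin n × Bool → ℝ

/-- The product of uniform measures on `[0,1]`: the distribution of the i.i.d. family
`(X^in_{v,w}, X^out_{v,w})`. -/
def muT (n : ℕ) : Measure (OmegaT n) :=
  Measure.pi fun _ => volume.restrict (Set.Icc (0 : ℝ) 1)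

/-- If `2p' - p'^2 = p` then `p' = pp p`: the parameter of the two independent copies
`D^in`, `D^out` whose union is `D_{n,p}`. -/
def pp (p : ℝ) : ℝ := 1 - Real.sqrt (1 - p)

/-- The labelled arc `u → w` with label `b` (`false` = "in", `true` = "out") is present at
time `p` (that is, in `D^in_{n,p'}` if `b = false`, and in `D^out_{n,p'}` if `b = true`,
where `2p' - p'^2 = p`). -/
def arcPres (n : ℕ) (ω : OmegaT n) (p : ℝ) (u w : Fin n) (b : Bool) : Prop :=
  u ≠ w ∧ ω (u, w, b) ≤ pp p

/-- The digraph `D_{n,p} = D^in_{n,p'} ∪ D^out_{n,p'}` at time `p` (labels forgotten,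
parallel pairs merged). -/
def Dat (n : ℕ) (ω : OmegaT n) (p : ℝ) (u w : Fin n) : Prop :=
  arcPres n ω p u w false ∨ arcPres n ω p u w true

/-- A vertex `v` is good (w.r.t. the bin partition `bin` and the reference time `pm`) if for
every bin `j` it has at least `4k+2` visible out-arcs (out-arcs with tail `v`) with head in
bin `j`, and at least `4k+2` visible in-arcs (in-arcs with head `v`) with tail in bin `j`,
at time `pm`. -/
def GoodV (n k : ℕ) (bin : Fin n → Fin k) (ω : OmegaT n) (pm : ℝ) (v : Fin n) : Prop :=
  ∀ j : Fin k,
    4 * k + 2 ≤ {w : Fin n | bin w = j ∧ arcPres n ω pm v w true}.ncard ∧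
    4 * k + 2 ≤ {w : Fin n | bin w = j ∧ arcPres n ω pm w v false}.ncard

/-- The total degree (in-degree plus out-degree) of `v` at time `pm`, all arcs (visible and
invisible, any label) counted. -/
def totDeg (n : ℕ) (ω : OmegaT n) (pm : ℝ) (v : Fin n) : ℕ :=
  {w : Fin n | Dat n ω pm v w}.ncard + {w : Fin n | Dat n ω pm w v}.ncard

/-- A vertex is dangerous if it is not good and its total degree at the reference time is at
most `4k+2`. -/
def DangerousV (n k : ℕ) (bin : Fin n → Fin k) (ω : OmegaT n) (pm : ℝ) (v : Fin n) : Prop :=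
  ¬ GoodV n k bin ω pm v ∧ totDeg n ω pm v ≤ 4 * k + 2

/-- Adjacency in the underlying undirected graph of the digraph `D`. -/
def UAdj (n : ℕ) (D : Fin n → Fin n → Prop) (x y : Fin n) : Prop := D x y ∨ D y x

/-- `y` is within `D`-distance `d` of `x`: there is a walk of length at most `d` from `x`
to `y` in the underlying undirected graph of `D`. -/
def WithinDist (n : ℕ) (D : Fin n → Fin n → Prop) (d : ℕ) (x y : Fin n) : Prop :=
  ∃ l : List (Fin n), l.length ≤ d ∧ List.Chain (UAdj n D) x l ∧
    (x :: l).getLast (List.cons_ne_nil x l) = y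

/-- Property H1 for the digraph `D`: every vertex has fewer than `4k` non-good vertices
within `D`-distance `10k`. -/
def PropH1 (n k : ℕ) (D : Fin n → Fin n → Prop) (Good : Fin n → Prop) : Prop :=
  ∀ v : Fin n, {w : Fin n | WithinDist n D (10 * k) v w ∧ ¬ Good w}.ncard < 4 * k

/-- Property H2 for the digraph `D`: every dangerous vertex has only good vertices within
`D`-distance `10k`. -/
def PropH2 (n k : ℕ) (D : Fin n → Fin n → Prop) (Good Dang : Fin n → Prop) : Prop :=
  ∀ v : Fin n, Dang v → ∀ w : Fin n, WithinDist n D (10 * k) v w → Good w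

/-- A cycle of length `l` in the digraph `D`, with any orientation of its edges: `l` distinct
vertices with consecutive ones adjacent in the underlying graph; a cycle of length `2`
consists of a pair of arcs in opposite directions. -/
def IsCycleRel (n l : ℕ) (D : Fin n → Fin n → Prop) (c : ZMod l → Fin n) : Prop :=
  Function.Injective c ∧
  (∀ i : ZMod l, D (c i) (c (i + 1)) ∨ D (c (i + 1)) (c i)) ∧
  (l = 2 → D (c 0) (c 1) ∧ D (c 1) (c 0))

/-- Property H3 for the digraph `D`: every cycle of length at most `10k` (with any
orientation, including cycles of length 2) has only good vertices within `D`-distance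
`10k`. -/
def PropH3Rel (n k : ℕ) (D : Fin n → Fin n → Prop) (Good : Fin n → Prop) : Prop :=
  ∀ l : ℕ, 2 ≤ l → l ≤ 10 * k →
    ∀ c : ZMod l → Fin n, IsCycleRel n l D c →
      ∀ i : ZMod l, ∀ w : Fin n, WithinDist n D (10 * k) (c i) w → Good w

section Helpers

variable {n : ℕ} {D : Fin n → Fin n → Prop}

lemma uadj_symm' {x y : Fin n} (h : UAdj n D x y) : UAdj n D y x := h.symm

lemma wd_refl' (d : ℕ) (x : Fin n) : WithinDist n D d x x :=
  ⟨[], by simp, List.Chain.nil, by simp⟩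

lemma wd_mono' {d d' : ℕ} (h : d ≤ d') {x y : Fin n} :
    WithinDist n D d x y → WithinDist n D d' x y :=
  fun ⟨l, hl, hc, he⟩ => ⟨l, hl.trans h, hc, he⟩

lemma wd_step' {d : ℕ} {x y z : Fin n} (hxy : UAdj n D x y)
    (h : WithinDist n D d y z) : WithinDist n D (d + 1) x z := by
  obtain ⟨l, hl, hc, he⟩ := h
  refine ⟨y :: l, by simpa using Nat.add_le_add_right hl 1, List.Chain.cons hxy hc, ?_⟩
  rw [List.getLast_cons (List.cons_ne_nil y l)]
  exact he

lemma wd_of_fn' (f : ℕ → Fin n) :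
    ∀ m : ℕ, (∀ i < m, UAdj n D (f i) (f (i + 1))) →
      WithinDist n D m (f 0) (f m) := by
  intro m
  induction m generalizing f with
  | zero => intro _; exact wd_refl' 0 (f 0)
  | succ m ih =>
    intro hadj
    have h1 := ih (fun i => f (i + 1)) (fun i hi => hadj (i + 1) (by omega))
    exact wd_step' (hadj 0 (by omega)) h1

end Helpers

section Helpers2
variable {n : ℕ} {D : Fin n → Fin n → Prop}

lemma wd_between' (P : List (Fin n)) (hch : P.Chain' (UAdj n D)) {a b : ℕ}
    (hab : a ≤ b) (hb : b < P.length) :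
    WithinDist n D (b - a) (P.get ⟨a, by omega⟩) (P.get ⟨b, hb⟩) := by
  have hc : ∀ i (h : i + 1 < P.length), UAdj n D (P.get ⟨i, by omega⟩) (P.get ⟨i + 1, h⟩) :=
    fun i h => List.isChain_iff_getElem.mp hch i h
  have key := wd_of_fn' (D := D)
    (fun i => P.get ⟨min (a + i) b, lt_of_le_of_lt (min_le_right _ _) hb⟩) (b - a) ?_
  · convert key using 3 <;> omega
  · intro i hi
    have := hc (a + i) (by omega)
    convert this using 3 <;> omega

lemma wd_betweenRev' (P : List (Fin n)) (hch : P.Chain' (UAdj n D)) {a b : ℕ}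
    (hab : b ≤ a) (ha : a < P.length) :
    WithinDist n D (a - b) (P.get ⟨a, ha⟩) (P.get ⟨b, by omega⟩) := by
  have hc : ∀ i (h : i + 1 < P.length), UAdj n D (P.get ⟨i, by omega⟩) (P.get ⟨i + 1, h⟩) :=
    fun i h => List.isChain_iff_getElem.mp hch i h
  have key := wd_of_fn' (D := D)
    (fun i => P.get ⟨a - min i (a - b), by omega⟩) (a - b) ?_
  · convert key using 3 <;> omega
  · intro i hi
    have h2 := hc (a - i - 1) (by omega)
    have e1 : a - i - 1 + 1 = a - min i (a - b) := by omega
    have e2 : a - i - 1 = a - min (i + 1) (a - b) := by omega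
    refine uadj_symm' ?_
    convert h2 using 3 <;> omega

lemma wd_mem_mem' (P : List (Fin n)) (hch : P.Chain' (UAdj n D)) {x y : Fin n}
    (hx : x ∈ P) (hy : y ∈ P) (d : ℕ) (hd : P.length - 1 ≤ d) :
    WithinDist n D d x y := by
  obtain ⟨⟨a, ha⟩, rfl⟩ := List.mem_iff_get.mp hx
  obtain ⟨⟨b, hb⟩, rfl⟩ := List.mem_iff_get.mp hy
  rcases le_or_gt a b with h | h
  · exact wd_mono' (by omega) (wd_between' P hch h hb)
  · exact wd_mono' (by omega) (wd_betweenRev' P hch (le_of_lt h) ha)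

end Helpers2

section Helpers3
variable {n k : ℕ} {D : Fin n → Fin n → Prop} {Good : Fin n → Prop}

lemma build_cycle' (h3 : PropH3Rel n k D Good)
    (f : ℕ → Fin n) (m : ℕ) (hm : 1 ≤ m) (hmk : m + 2 ≤ 10 * k)
    (hinj : ∀ i ≤ m, ∀ j ≤ m, f i = f j → i = j)
    (hadj : ∀ i < m, UAdj n D (f i) (f (i + 1)))
    (v : Fin n) (hv : ∀ i ≤ m, f i ≠ v)
    (hv0 : UAdj n D v (f 0)) (hvm : UAdj n D v (f m)) :
    ∀ w, WithinDist n D (10 * k) (f 0) w → Good w := by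
  haveI : NeZero (m + 2) := ⟨by omega⟩
  haveI : Fact (1 < m + 2) := ⟨by omega⟩
  set c : ZMod (m + 2) → Fin n := fun i => if h : i.val ≤ m then f i.val else v with hc
  have hval : ∀ i : ZMod (m + 2), i.val < m + 2 := fun i => ZMod.val_lt i
  have hsucc : ∀ i : ZMod (m + 2), (i + 1).val = (i.val + 1) % (m + 2) := by
    intro i; rw [ZMod.val_add, ZMod.val_one]
  have hcinj : Function.Injective c := by
    intro i j hij
    simp only [hc] at hij
    by_cases hi : i.val ≤ m <;> by_cases hj : j.val ≤ m
    · rw [dif_pos hi, dif_pos hj] at hij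
      exact ZMod.val_injective _ (hinj _ hi _ hj hij)
    · rw [dif_pos hi, dif_neg hj] at hij
      exact absurd hij (hv _ hi)
    · rw [dif_neg hi, dif_pos hj] at hij
      exact absurd hij.symm (hv _ hj)
    · apply ZMod.val_injective
      have := hval i; have := hval j; omega
  have hcadj : ∀ i : ZMod (m + 2), D (c i) (c (i + 1)) ∨ D (c (i + 1)) (c i) := by
    intro i
    have h1 := hval i
    have h2 := hsucc i
    rcases lt_trichotomy i.val m with h | h | h
    · have e1 : (i + 1).val = i.val + 1 := by rw [h2]; exact Nat.mod_eq_of_lt (by omega)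
      simp only [hc, e1]
      rw [dif_pos (by omega : i.val ≤ m), dif_pos (by omega : i.val + 1 ≤ m)]
      exact hadj i.val h
    · have e1 : (i + 1).val = m + 1 := by rw [h2, h]; exact Nat.mod_eq_of_lt (by omega)
      simp only [hc, e1, h]
      rw [dif_pos (le_refl m), dif_neg (by omega : ¬ m + 1 ≤ m)]
      exact uadj_symm' hvm
    · have him : i.val = m + 1 := by omega
      have e1 : (i + 1).val = 0 := by rw [h2, him]; simp
      simp only [hc, e1, him]
      rw [dif_neg (by omega : ¬ m + 1 ≤ m), dif_pos (Nat.zero_le m)]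
      exact hv0
  have hcyc : IsCycleRel n (m + 2) D c := ⟨hcinj, hcadj, fun h => absurd h (by omega)⟩
  have h0 : c 0 = f 0 := by
    simp only [hc]
    have e : ((0 : ZMod (m + 2)).val) = 0 := ZMod.val_zero
    rw [e, dif_pos (Nat.zero_le m)]
  intro w hw
  exact h3 (m + 2) (by omega) hmk c hcyc 0 w (by rwa [h0])

end Helpers3

section Helpers4
variable {n k : ℕ} {D : Fin n → Fin n → Prop} {Good : Fin n → Prop}

lemma lemC' (hk : 3 ≤ k) (h3 : PropH3Rel n k D Good)
    (hNL : ∀ x y : Fin n, UAdj n D x y → x ≠ y)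
    {P : List (Fin n)} (hnd : P.Nodup) (hch : P.Chain' (UAdj n D))
    (hlen : P.length ≤ 6 * k + 3)
    {u : Fin n} (hu : u ∈ P) (hug : ¬ Good u)
    {v : Fin n} {a b : ℕ} (hab : a < b) (hb : b < P.length)
    (hv1 : UAdj n D v (P.get ⟨a, by omega⟩)) (hv2 : UAdj n D v (P.get ⟨b, hb⟩)) :
    b = a + 2 ∧ P.get ⟨a + 1, by omega⟩ = v := by
  have hinjP : Function.Injective P.get := List.nodup_iff_injective_get.mp hnd
  have hcg : ∀ i (h : i + 1 < P.length), UAdj n D (P.get ⟨i, by omega⟩) (P.get ⟨i + 1, h⟩) :=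
    fun i h => List.isChain_iff_getElem.mp hch i h
  have hadjP : ∀ (i : ℕ) (h : i + 1 < P.length),
      UAdj n D (P.get ⟨i, by omega⟩) (P.get ⟨i + 1, h⟩) := fun i h => hcg i (by omega)
  have getEq : ∀ {i j : ℕ} (hi : i < P.length) (hj : j < P.length), i = j →
      P.get ⟨i, hi⟩ = P.get ⟨j, hj⟩ := by intro i j hi hj h; subst h; rfl
  -- general contradiction from a segment whose interior and endpoints avoid v
  have contra : ∀ (s1 s2 : ℕ) (hs : s1 < s2) (hs2 : s2 < P.length),
      UAdj n D v (P.get ⟨s1, by omega⟩) → UAdj n D v (P.get ⟨s2, hs2⟩) →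
      (∀ t, s1 ≤ t → t ≤ s2 → ∀ (ht : t < P.length), P.get ⟨t, ht⟩ ≠ v) → False := by
    intro s1 s2 hs hs2 ha1 ha2 hnv
    have hkey := build_cycle' h3
      (fun i => P.get ⟨min (s1 + i) s2, lt_of_le_of_lt (min_le_right _ _) hs2⟩)
      (s2 - s1) (by omega) (by omega) ?_ ?_ v ?_ ?_ ?_
    · refine hug (hkey u ?_)
      exact wd_mem_mem' P hch (List.get_mem _ _) hu (10 * k) (by omega)
    · intro i hi j hj hf
      have := hinjP hf
      have := Fin.mk.injEq _ _ _ _ ▸ this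
      omega
    · intro i hi
      have := hcg (s1 + i) (by omega)
      convert this using 3 <;> omega
    · intro i hi h
      exact hnv (min (s1 + i) s2) (by omega) (by omega) _ h
    · convert ha1 using 3; omega
    · convert ha2 using 3; omega
  by_cases hvin : ∃ t, a ≤ t ∧ t ≤ b ∧ ∃ ht : t < P.length, P.get ⟨t, ht⟩ = v
  · obtain ⟨t, hat, htb, ht, hgt⟩ := hvin
    have hta : t ≠ a := by
      intro h
      exact hNL v _ hv1 ((getEq _ _ h.symm).trans hgt).symm
    have htb' : t ≠ b := by
      intro h
      exact hNL v _ hv2 ((getEq _ _ h.symm).trans hgt).symm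
    by_cases h2a : a + 2 ≤ t
    · exfalso
      refine contra a (t - 1) (by omega) (by omega) hv1 ?_ ?_
      · have h := hadjP (t - 1) (by omega)
        have e : P.get ⟨t - 1 + 1, by omega⟩ = v := (getEq _ _ (by omega)).trans hgt
        rw [e] at h
        exact uadj_symm' h
      · intro s hs1 hs2 hsl hgs
        have := hinjP (hgs.trans hgt.symm)
        have := Fin.mk.injEq _ _ _ _ ▸ this
        omega
    · by_cases h2b : t + 2 ≤ b
      · exfalso
        refine contra (t + 1) b (by omega) hb ?_ hv2 ?_
        · have h := hadjP t (by omega)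
          have e : P.get ⟨t, by omega⟩ = v := hgt
          rw [e] at h
          exact h
        · intro s hs1 hs2 hsl hgs
          have := hinjP (hgs.trans hgt.symm)
          have := Fin.mk.injEq _ _ _ _ ▸ this
          omega
      · have he : t = a + 1 ∧ b = a + 2 := by omega
        exact ⟨he.2, (getEq _ _ he.1.symm).trans hgt⟩
  · push_neg at hvin
    exact absurd (contra a b hab hb hv1 hv2 hvin) id

end Helpers4


/-- Lemma on useful properties: fix `k ≥ 3`, a bin partition, a sample point
`ω` of the coupled process and reference times `pminus ≤ pplus`, with vertices classified as
good/dangerous at time `pminus`. Let `D` be any digraph with `D_{n,pminus} ⊆ D ⊆ D_{n,pplus}`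
satisfying H1, H2 and H3, and let `P₀` be a collection of pairwise vertex-disjoint paths
in `D`, each of length at most `6k+2` (i.e. with at most `6k+3` vertices) and each containing
exactly one non-good vertex. Then:
(H4) every neighbour of a dangerous vertex is good and lies in no path of `P₀`; and
(H5) for every vertex `v`, all but at most `4k` of the neighbours of `v` are good and lie in
no path of `P₀`. -/
theorem stmt_12 (n k : ℕ) (hk : 3 ≤ k) (bin : Fin n → Fin k) (ω : OmegaT n)
    (pminus pplus : ℝ) (hp : pminus ≤ pplus)
    (D : Fin n → Fin n → Prop)
    (hlow : ∀ u w : Fin n, Dat n ω pminus u w → D u w)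
    (hhigh : ∀ u w : Fin n, D u w → Dat n ω pplus u w)
    (h1 : PropH1 n k D (GoodV n k bin ω pminus))
    (h2 : PropH2 n k D (GoodV n k bin ω pminus) (DangerousV n k bin ω pminus))
    (h3 : PropH3Rel n k D (GoodV n k bin ω pminus))
    (P0 : Set (List (Fin n)))
    (hpaths : ∀ P ∈ P0, P ≠ [] ∧ P.Nodup ∧ P.Chain' (UAdj n D) ∧ P.length ≤ 6 * k + 3 ∧
      (∃! v : Fin n, v ∈ P ∧ ¬ GoodV n k bin ω pminus v))
    (hdisj : ∀ P ∈ P0, ∀ Q ∈ P0, P ≠ Q → ∀ v : Fin n, v ∈ P → v ∉ Q) :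
    (∀ v : Fin n, DangerousV n k bin ω pminus v →
      ∀ w : Fin n, UAdj n D v w →
        GoodV n k bin ω pminus w ∧ ∀ P ∈ P0, w ∉ P) ∧
    (∀ v : Fin n,
      {w : Fin n | UAdj n D v w ∧
        ¬ (GoodV n k bin ω pminus w ∧ ∀ P ∈ P0, w ∉ P)}.ncard ≤ 4 * k) := by
  set Good := GoodV n k bin ω pminus with hGdef
  have hNL : ∀ x y : Fin n, UAdj n D x y → x ≠ y := by
    intro x y h hxy
    subst hxy
    rcases h with h | h <;> rcases hhigh _ _ h with h' | h' <;> exact h'.1 rfl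
  have wdsingle : ∀ x y : Fin n, UAdj n D x y → WithinDist n D (10 * k) x y := by
    intro x y h
    exact wd_mono' (by omega) (wd_step' h (wd_refl' 0 y))
  have hPuniq : ∀ P ∈ P0, ∀ Q ∈ P0, ∀ x : Fin n, x ∈ P → x ∈ Q → P = Q := by
    intro P hP Q hQ x hxP hxQ
    by_contra hne
    exact hdisj P hP Q hQ hne x hxP hxQ
  have H4 : ∀ v : Fin n, DangerousV n k bin ω pminus v →
      ∀ w : Fin n, UAdj n D v w → Good w ∧ ∀ P ∈ P0, w ∉ P := by
    intro v hd w hadj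
    refine ⟨h2 v hd w (wdsingle v w hadj), ?_⟩
    intro P hP hwP
    obtain ⟨hne, hnd, hch, hlen, u, ⟨huP, hug⟩, -⟩ := hpaths P hP
    refine hug (h2 v hd u ?_)
    exact wd_mono' (by omega)
      (wd_step' hadj (wd_mem_mem' P hch hwP huP (6 * k + 2) (by omega)))
  refine ⟨H4, ?_⟩
  intro v
  have hS := h1 v
  set S := {w : Fin n | WithinDist n D (10 * k) v w ∧ ¬ Good w} with hSdef
  set B := {w : Fin n | UAdj n D v w ∧ ¬ (Good w ∧ ∀ P ∈ P0, w ∉ P)} with hBdef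
  show B.ncard ≤ 4 * k
  -- specialized pair lemma
  have lemCP : ∀ P ∈ P0, ∀ w1 w2 : Fin n, w1 ∈ P → w2 ∈ P → w1 ≠ w2 →
      UAdj n D v w1 → UAdj n D v w2 →
      v ∈ P ∧ ((P.idxOf w1 + 1 = P.idxOf v ∧ P.idxOf w2 = P.idxOf v + 1) ∨
               (P.idxOf w2 + 1 = P.idxOf v ∧ P.idxOf w1 = P.idxOf v + 1)) := by
    intro P hP w1 w2 hw1 hw2 hne hv1 hv2
    obtain ⟨-, hnd, hch, hlen, u, ⟨huP, hug⟩, -⟩ := hpaths P hP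
    have hinjP : Function.Injective P.get := List.nodup_iff_injective_get.mp hnd
    have ha : P.idxOf w1 < P.length := List.idxOf_lt_length_iff.mpr hw1
    have hb : P.idxOf w2 < P.length := List.idxOf_lt_length_iff.mpr hw2
    have hga : P.get ⟨P.idxOf w1, ha⟩ = w1 := List.getElem_idxOf ha
    have hgb : P.get ⟨P.idxOf w2, hb⟩ = w2 := List.getElem_idxOf hb
    have hab : P.idxOf w1 ≠ P.idxOf w2 := by
      intro h
      apply hne
      rw [← hga, ← hgb]
      exact congrArg P.get (Fin.mk_eq_mk.mpr h)
    have main : ∀ (x y : Fin n), x ∈ P → y ∈ P → UAdj n D v x → UAdj n D v y →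
        P.idxOf x < P.idxOf y →
        v ∈ P ∧ P.idxOf y = P.idxOf x + 2 ∧ P.idxOf v = P.idxOf x + 1 := by
      intro x y hx hy hvx hvy hlt
      have hax : P.idxOf x < P.length := List.idxOf_lt_length_iff.mpr hx
      have hay : P.idxOf y < P.length := List.idxOf_lt_length_iff.mpr hy
      have hgx : P.get ⟨P.idxOf x, hax⟩ = x := List.getElem_idxOf hax
      have hgy : P.get ⟨P.idxOf y, hay⟩ = y := List.getElem_idxOf hay
      have hres := lemC' hk h3 hNL hnd hch hlen huP hug hlt hay
        (by rwa [hgx]) (by rwa [hgy])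
      have hvmem : v ∈ P := by
        rw [← hres.2]
        exact List.get_mem _ _
      have hidx : P.idxOf v = P.idxOf x + 1 := by
        have hiv : P.idxOf v < P.length := List.idxOf_lt_length_iff.mpr hvmem
        have : P.get ⟨P.idxOf v, hiv⟩ = v := List.getElem_idxOf hiv
        have := hinjP (this.trans hres.2.symm)
        exact Fin.mk_eq_mk.mp this
      exact ⟨hvmem, hres.1, hidx⟩
    rcases lt_or_gt_of_ne hab with h | h
    · obtain ⟨hm, h1', h2'⟩ := main w1 w2 hw1 hw2 hv1 hv2 h
      exact ⟨hm, Or.inl ⟨by omega, by omega⟩⟩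
    · obtain ⟨hm, h1', h2'⟩ := main w2 w1 hw2 hw1 hv2 hv1 h
      exact ⟨hm, Or.inr ⟨by omega, by omega⟩⟩
  rcases isEmpty_or_nonempty (Fin n) with hemp | hne
  · rw [Set.eq_empty_of_isEmpty B, Set.ncard_empty]
    exact Nat.zero_le _
  haveI : Inhabited (Fin n) := Classical.inhabited_of_nonempty hne
  have hexu : ∀ P ∈ P0, ∃ u : Fin n, u ∈ P ∧ ¬ Good u := by
    intro P hP
    obtain ⟨-, -, -, -, u, ⟨huP, hug⟩, -⟩ := hpaths P hP
    exact ⟨u, huP, hug⟩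
  choose! uF hFmem hFng using hexu
  set g : Fin n → Fin n := fun w => if h : ∃ P, P ∈ P0 ∧ w ∈ P then uF h.choose else w
    with hgdef
  have hgspec : ∀ (w : Fin n), ∀ P ∈ P0, w ∈ P → g w = uF P := by
    intro w P hP hwP
    have h : ∃ P, P ∈ P0 ∧ w ∈ P := ⟨P, hP, hwP⟩
    have hc := h.choose_spec
    have he : h.choose = P := hPuniq _ hc.1 _ hP w hc.2 hwP
    simp only [hgdef]
    rw [dif_pos h, he]
  have hgoff : ∀ w : Fin n, (¬ ∃ P, P ∈ P0 ∧ w ∈ P) → g w = w := by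
    intro w hw
    simp only [hgdef]
    rw [dif_neg hw]
  have hBoffS : ∀ w ∈ B, (¬ ∃ P, P ∈ P0 ∧ w ∈ P) → w ∈ S := by
    intro w hw hnp
    have hng : ¬ Good w := by
      intro hg
      exact hw.2 ⟨hg, fun P hP hwP => hnp ⟨P, hP, hwP⟩⟩
    exact ⟨wdsingle v w hw.1, hng⟩
  have huFS : ∀ P ∈ P0, ∀ w ∈ B, w ∈ P → uF P ∈ S := by
    intro P hP w hw hwP
    obtain ⟨-, -, hch, hlen, -⟩ := hpaths P hP
    refine ⟨?_, hFng P hP⟩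
    exact wd_mono' (by omega)
      (wd_step' hw.1 (wd_mem_mem' P hch hwP (hFmem P hP) (6 * k + 2) (by omega)))
  have hginj : ∀ w1 ∈ B, ∀ w2 ∈ B, g w1 = g w2 → w1 ≠ w2 →
      ∃ P ∈ P0, v ∈ P ∧ w1 ∈ P ∧ w2 ∈ P := by
    intro w1 hw1 w2 hw2 hg hne'
    by_cases hp1 : ∃ P, P ∈ P0 ∧ w1 ∈ P
    · obtain ⟨P, hP, hw1P⟩ := hp1
      rw [hgspec w1 P hP hw1P] at hg
      by_cases hp2 : ∃ Q, Q ∈ P0 ∧ w2 ∈ Q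
      · obtain ⟨Q, hQ, hw2Q⟩ := hp2
        rw [hgspec w2 Q hQ hw2Q] at hg
        have hPQ : P = Q := hPuniq P hP Q hQ (uF P) (hFmem P hP) (hg ▸ hFmem Q hQ)
        subst hPQ
        have := lemCP P hP w1 w2 hw1P hw2Q hne' hw1.1 hw2.1
        exact ⟨P, hP, this.1, hw1P, hw2Q⟩
      · rw [hgoff w2 hp2] at hg
        exact absurd ⟨P, hP, hg ▸ hFmem P hP⟩ hp2
    · rw [hgoff w1 hp1] at hg
      by_cases hp2 : ∃ Q, Q ∈ P0 ∧ w2 ∈ Q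
      · obtain ⟨Q, hQ, hw2Q⟩ := hp2
        rw [hgspec w2 Q hQ hw2Q] at hg
        exact absurd ⟨Q, hQ, hg ▸ hFmem Q hQ⟩ hp1
      · rw [hgoff w2 hp2] at hg
        exact absurd hg hne'
  by_cases hvP : ∃ P, P ∈ P0 ∧ v ∈ P
  · obtain ⟨Pv, hPv, hvPv⟩ := hvP
    have huS : uF Pv ∈ S := by
      obtain ⟨-, -, hch, hlen, -⟩ := hpaths Pv hPv
      exact ⟨wd_mem_mem' Pv hch hvPv (hFmem Pv hPv) (10 * k) (by omega), hFng Pv hPv⟩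
    set T : Set (Fin n) := {w | w ∈ Pv} with hTdef
    have hBle : B.ncard ≤ (B \ T).ncard + (B ∩ T).ncard := by
      have h := Set.ncard_union_le (B \ T) (B ∩ T)
      rwa [Set.diff_union_inter] at h
    have hpart1 : (B \ T).ncard ≤ (S \ {uF Pv}).ncard := by
      apply Set.ncard_le_ncard_of_injOn g ?_ ?_ (Set.toFinite _)
      · intro w hw
        by_cases hp : ∃ P, P ∈ P0 ∧ w ∈ P
        · obtain ⟨P, hP, hwP⟩ := hp
          rw [hgspec w P hP hwP]
          refine ⟨huFS P hP w hw.1 hwP, ?_⟩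
          simp only [Set.mem_singleton_iff]
          intro heq
          have : P = Pv := hPuniq P hP Pv hPv (uF P) (hFmem P hP) (heq ▸ hFmem Pv hPv)
          exact hw.2 (show w ∈ Pv from this ▸ hwP)
        · rw [hgoff w hp]
          refine ⟨hBoffS w hw.1 hp, ?_⟩
          simp only [Set.mem_singleton_iff]
          intro heq
          exact hw.2 (heq ▸ hFmem Pv hPv)
      · intro w1 h1' w2 h2' hg
        by_contra hne'
        obtain ⟨P, hP, hvmem, hw1P, -⟩ := hginj w1 h1'.1 w2 h2'.1 hg hne'
        have : P = Pv := hPuniq P hP Pv hPv v hvmem hvPv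
        exact h1'.2 (show w1 ∈ Pv from this ▸ hw1P)
    have hpart2 : (B ∩ T).ncard ≤ 2 := by
      by_cases hpair : ∃ w1 ∈ B ∩ T, ∃ w2 ∈ B ∩ T, w1 ≠ w2
      · obtain ⟨w1, hw1, w2, hw2, hne'⟩ := hpair
        have hsub : B ∩ T ⊆
            {Pv.getD (Pv.idxOf v - 1) v, Pv.getD (Pv.idxOf v + 1) v} := by
          intro w hw
          have hpick : ∃ w', w' ∈ B ∩ T ∧ w' ≠ w := by
            by_cases h : w = w1
            · exact ⟨w2, hw2, fun hh => hne' (h ▸ hh.symm)⟩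
            · exact ⟨w1, hw1, fun hh => h hh.symm⟩
          obtain ⟨w', hw', hne''⟩ := hpick
          have hlem := lemCP Pv hPv w w' hw.2 hw'.2 (Ne.symm hne'') hw.1.1 hw'.1.1
          have hiw : Pv.idxOf w < Pv.length := List.idxOf_lt_length_iff.mpr hw.2
          have hgw : Pv.get ⟨Pv.idxOf w, hiw⟩ = w := List.getElem_idxOf hiw
          rcases hlem.2 with ⟨hx, -⟩ | ⟨-, hx⟩
          · left
            have e : Pv.idxOf v - 1 = Pv.idxOf w := by omega
            rw [e, List.getD_eq_getElem _ _ hiw]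
            exact hgw.symm
          · right
            have e : Pv.idxOf v + 1 = Pv.idxOf w := by omega
            rw [e, List.getD_eq_getElem _ _ hiw]
            exact hgw.symm
        calc (B ∩ T).ncard ≤ _ := Set.ncard_le_ncard hsub (Set.toFinite _)
          _ ≤ _ + 1 := Set.ncard_insert_le _ _
          _ ≤ 2 := by simp [Set.ncard_singleton]
      · push_neg at hpair
        have hss : (B ∩ T).Subsingleton := fun x hx y hy => hpair x hx y hy
        rcases hss.eq_empty_or_singleton with h | ⟨x, h⟩ <;> simp [h]
    have hpart3 : (S \ {uF Pv}).ncard + 1 = S.ncard :=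
      Set.ncard_diff_singleton_add_one huS (Set.toFinite S)
    omega
  · have hmaps : ∀ w ∈ B, g w ∈ S := by
      intro w hw
      by_cases hp : ∃ P, P ∈ P0 ∧ w ∈ P
      · obtain ⟨P, hP, hwP⟩ := hp
        rw [hgspec w P hP hwP]
        exact huFS P hP w hw hwP
      · rw [hgoff w hp]
        exact hBoffS w hw hp
    have hinj : Set.InjOn g B := by
      intro w1 h1' w2 h2' hg
      by_contra hne'
      obtain ⟨P, hP, hvmem, -, -⟩ := hginj w1 h1' w2 h2' hg hne'
      exact hvP ⟨P, hP, hvmem⟩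
    have := Set.ncard_le_ncard_of_injOn g hmaps hinj (Set.toFinite S)
    omega

end
end
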